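/- arXiv:2303.11927 — 5 statements merged into one kernel-verified Lean document; each statement's English description precedes it below -/
import Mathlib

section
/- Renovation property of triangular words for the MGS: Fix M > 0. Let x = (x^{(1)}, …, x^{(l)}) be a finite sequence of weight sequences, each with all entries in [-∞, M], such that the associated word α(x) (whose n-th letter is the index of the first occurrence of the value M in x^{(n)}) is a triangular word. Then for every configuration λ, the displacement 𝔪(Φ_{(x^{(1)},…,x^{(l-1)})}(λ), x^{(l)}) − λ_1 does not depend on λ; moreover 𝔪(Φ_{(x^{(1)},…,x^{(i-1)})}(λ), x^{(i)}) − λ_1 ≥ M for all 1 ≤ i ≤ l. -/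
noncomputable section

/-- `𝔪(λ, x) = max_{1 ≤ i ≤ #λ} (λ_i + x_i)`, for a configuration recorded as the list of its
particle positions in decreasing order. -/
def mvalL (l : List EReal) (x : ℕ → EReal) : EReal :=
  sSup {v | ∃ i : Fin l.length, v = l.get i + x ((i : ℕ) + 1)}

/-- One step `Φ_x` of the max growth system: add a particle at position `𝔪(λ, x)`,
keeping the list sorted in decreasing order. -/
def stepC (x : ℕ → EReal) (l : List EReal) : List EReal :=
  letI : DecidableRel (fun a b : EReal => a ≥ b) := Classical.decRel _
  l.orderedInsert (· ≥ ·) (mvalL l x)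

/-- `Φ_{(x^{(1)},…,x^{(k)})} = Φ_{x^{(k)}} ∘ ⋯ ∘ Φ_{x^{(1)}}`. -/
def iterSteps (xs : List (ℕ → EReal)) (l : List EReal) : List EReal :=
  xs.foldl (fun acc x => stepC x acc) l

end

section Aux

noncomputable def decGEEReal : DecidableRel (fun a b : EReal => a ≥ b) := Classical.decRel _

attribute [local instance 2000] decGEEReal

lemma foldr_max_base (b : EReal) (L : List EReal) : b ≤ L.foldr max b := by
  induction L with
  | nil => simp
  | cons a t ih => exact le_trans ih (le_max_right _ _)

lemma foldr_max_mem {a : EReal} {L : List EReal} (b : EReal) (h : a ∈ L) :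
    a ≤ L.foldr max b := by
  induction L with
  | nil => simp at h
  | cons c t ih =>
    rcases List.mem_cons.1 h with h | h
    · subst h; exact le_max_left _ _
    · exact le_trans (ih h) (le_max_right _ _)

lemma foldr_max_cases (b : EReal) (L : List EReal) :
    L.foldr max b = b ∨ L.foldr max b ∈ L := by
  induction L with
  | nil => left; rfl
  | cons a t ih =>
    simp only [List.foldr_cons]
    rcases le_total a (t.foldr max b) with h | h
    · rw [max_eq_right h]
      rcases ih with h' | h'
      · exact Or.inl h'
      · exact Or.inr (List.mem_cons_of_mem _ h')
    · rw [max_eq_left h]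
      exact Or.inr (List.mem_cons_self)

/-- The displacement after one step, given the list `es` of previous displacements. -/
noncomputable def Dv (M : EReal) (x : ℕ → EReal) (es : List EReal) : EReal :=
  (List.ofFn (fun j : Fin es.length => es.get j + x ((j : ℕ) + 1))).foldr max M

lemma M_le_Dv (M : EReal) (x : ℕ → EReal) (es : List EReal) : M ≤ Dv M x es :=
  foldr_max_base _ _

lemma constPrefix (hd d : EReal) (es : List EReal)
    (h : ∀ e ∈ es, hd + e ≤ hd + d) :
    (List.orderedInsert (· ≥ ·) d es).map (hd + ·) = (hd + d) :: es.map (hd + ·) := by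
  induction es with
  | nil => simp [List.orderedInsert]
  | cons a t ih =>
    by_cases hda : d ≥ a
    · simp [List.orderedInsert, hda]
    · have h1 : hd + a ≤ hd + d := h a (List.mem_cons_self)
      have h2 : hd + d ≤ hd + a := add_le_add le_rfl (le_of_not_ge hda)
      have heq : hd + a = hd + d := le_antisymm h1 h2
      simp only [List.orderedInsert, if_neg hda, List.map_cons]
      rw [ih (fun e he => h e (List.mem_cons_of_mem _ he)), heq]

lemma insertMap (hd d : EReal) (hd0 : (0 : EReal) ≤ d) :
    ∀ es : List EReal, es.Pairwise (· ≥ ·) → ∀ tail : List EReal, (∀ a ∈ tail, a ≤ hd) →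
      List.orderedInsert (· ≥ ·) (hd + d) (es.map (hd + ·) ++ tail)
        = (List.orderedInsert (· ≥ ·) d es).map (hd + ·) ++ tail := by
  intro es
  induction es with
  | nil =>
    intro _ tail htail
    cases tail with
    | nil => simp [List.orderedInsert]
    | cons b t =>
      have hb : hd + d ≥ b :=
        le_trans (htail b (List.mem_cons_self)) (le_add_of_nonneg_right hd0)
      simp [List.orderedInsert, hb]
  | cons e t ih =>
    intro hs tail htail
    have hst : t.Pairwise (· ≥ ·) := hs.of_cons
    by_cases hde : hd + d ≥ hd + e
    · by_cases h2 : d ≥ e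
      · simp [List.orderedInsert, hde, h2]
      · have hle : hd + d ≤ hd + e := add_le_add le_rfl (le_of_not_ge h2)
        have heq : hd + d = hd + e := le_antisymm hle hde
        have hb : ∀ e' ∈ t, hd + e' ≤ hd + d := by
          intro e' he'
          calc hd + e' ≤ hd + e := add_le_add le_rfl (List.rel_of_pairwise_cons hs he')
            _ = hd + d := heq.symm
        simp only [List.map_cons, List.cons_append, List.orderedInsert, if_pos hde, if_neg h2,
          List.append_eq]
        rw [constPrefix hd d t hb, heq]
        simp
    · have h2 : ¬ d ≥ e := fun hge => hde (add_le_add le_rfl hge)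
      simp only [List.map_cons, List.cons_append, List.orderedInsert, if_neg hde, if_neg h2,
        List.append_eq]
      rw [ih hst tail htail]

lemma sorted_le_headI {lam : List EReal} (h : lam.Pairwise (· ≥ ·)) :
    ∀ a ∈ lam, a ≤ lam.headI := by
  cases lam with
  | nil => intro a ha; simp at ha
  | cons b t =>
    intro a ha
    rcases List.mem_cons.1 ha with rfl | ha
    · exact le_rfl
    · exact List.rel_of_pairwise_cons h ha

lemma mval_formula (M' : EReal) (hM0 : (0 : EReal) ≤ M') (x : ℕ → EReal)
    (hb : ∀ i, x i ≤ M') (a : ℕ) (ha1 : 1 ≤ a) (hax : x a = M')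
    (es : List EReal) (hesM : ∀ e ∈ es, M' ≤ e) (han : a ≤ es.length + 1)
    (lam : List EReal) (hne : lam ≠ []) (hlam : ∀ b ∈ lam, b ≤ lam.headI) :
    mvalL (es.map (lam.headI + ·) ++ lam) x = lam.headI + Dv M' x es := by
  have hlampos : 0 < lam.length := List.length_pos_iff.2 hne
  set hd := lam.headI with hhd
  have hget0 : hd = lam[0]'hlampos := by
    cases lam with
    | nil => simp at hne
    | cons b t => rfl
  simp only [mvalL]
  apply le_antisymm
  · apply sSup_le
    rintro v ⟨i, rfl⟩
    rw [List.get_eq_getElem]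
    by_cases hi : (i : ℕ) < es.length
    · have hmap : (i : ℕ) < (es.map (hd + ·)).length := by simpa using hi
      rw [List.getElem_append_left hmap, List.getElem_map, add_assoc]
      refine add_le_add le_rfl (foldr_max_mem _ ?_)
      rw [List.mem_ofFn]
      exact ⟨⟨i, hi⟩, by simp⟩
    · have h1 : (es.map (hd + ·)).length ≤ (i : ℕ) := by simpa using le_of_not_gt hi
      rw [List.getElem_append_right h1]
      calc _ ≤ hd + M' := add_le_add (hlam _ (List.getElem_mem _)) (hb _)
        _ ≤ hd + Dv M' x es := add_le_add le_rfl (M_le_Dv _ _ _)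
  · rcases foldr_max_cases M'
        (List.ofFn (fun j : Fin es.length => es.get j + x ((j : ℕ) + 1))) with hD | hD
    · have hDv : Dv M' x es = M' := hD
      rw [hDv]
      by_cases hcase : a ≤ es.length
      · have hj : a - 1 < es.length := by omega
        have hjL : a - 1 < (es.map (hd + ·) ++ lam).length := by
          simp only [List.length_append, List.length_map]; omega
        refine le_trans ?_ (le_sSup ⟨⟨a - 1, hjL⟩, rfl⟩)
        have ha11 : a - 1 + 1 = a := by omega
        have hmap : a - 1 < (es.map (hd + ·)).length := by simpa using hj
        rw [List.get_eq_getElem, List.getElem_append_left hmap, List.getElem_map, ha11, hax]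
        exact add_le_add
          (le_add_of_nonneg_right (le_trans hM0 (hesM _ (List.getElem_mem _)))) le_rfl
      · have hae : a = es.length + 1 := by omega
        have hnL : es.length < (es.map (hd + ·) ++ lam).length := by
          simp only [List.length_append, List.length_map]; omega
        refine le_trans ?_ (le_sSup ⟨⟨es.length, hnL⟩, rfl⟩)
        rw [List.get_eq_getElem,
          List.getElem_append_right (by simp : (es.map (hd + ·)).length ≤ es.length)]
        simp only [List.length_map, Nat.sub_self]
        rw [← hget0, ← hae, hax]
    · rw [List.mem_ofFn] at hD
      obtain ⟨j, hj⟩ := hD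
      have hjL : (j : ℕ) < (es.map (hd + ·) ++ lam).length := by
        have := j.isLt
        simp only [List.length_append, List.length_map]; omega
      refine le_trans ?_ (le_sSup ⟨⟨j, hjL⟩, rfl⟩)
      have hmap : (j : ℕ) < (es.map (hd + ·)).length := by simp
      have hDj : Dv M' x es = es.get j + x ((j : ℕ) + 1) := hj.symm
      rw [hDj, List.get_eq_getElem, List.get_eq_getElem, List.getElem_append_left hmap,
        List.getElem_map, ← add_assoc]

lemma invariant (M : ℝ) (hM : 0 < M) (l : ℕ)
    (xs : Fin l → (ℕ → EReal))
    (hbound : ∀ n i, xs n i ≤ (M : EReal))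
    (α : Fin l → ℕ)
    (hα : ∀ n : Fin l, 1 ≤ α n ∧ xs n (α n) = (M : EReal) ∧
      ∀ j, 1 ≤ j → j < α n → xs n j ≠ (M : EReal))
    (htri : ∀ n : Fin l, α n ≤ (n : ℕ) + 1) :
    ∀ k : ℕ, k ≤ l → ∃ es : List EReal, es.Pairwise (· ≥ ·) ∧ (∀ e ∈ es, (M : EReal) ≤ e) ∧
      es.length = k ∧
      ∀ lam : List EReal, lam ≠ [] → lam.Pairwise (· ≥ ·) →
        iterSteps ((List.ofFn xs).take k) lam = es.map (lam.headI + ·) ++ lam := by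
  have hM0 : (0 : EReal) ≤ (M : EReal) := by exact_mod_cast hM.le
  intro k
  induction k with
  | zero =>
    intro _
    exact ⟨[], List.Pairwise.nil, by simp, rfl, fun lam _ _ => by simp [iterSteps]⟩
  | succ k ih =>
    intro hk1
    obtain ⟨es, hsort, hmem, hlen, hiter⟩ := ih (by omega)
    have hkl : k < l := by omega
    set n : Fin l := ⟨k, hkl⟩ with hn
    refine ⟨List.orderedInsert (· ≥ ·) (Dv M (xs n) es) es, ?_, ?_, ?_, ?_⟩
    · exact hsort.orderedInsert _ _
    · intro e he
      rcases (List.mem_orderedInsert _).1 he with rfl | he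
      · exact M_le_Dv _ _ _
      · exact hmem e he
    · rw [List.orderedInsert_length]; omega
    · intro lam hne hs
      have htake : (List.ofFn xs).take (k + 1) = (List.ofFn xs).take k ++ [xs n] := by
        rw [List.take_succ]
        congr 1
        rw [List.getElem?_eq_getElem (by simpa using hkl)]
        simp [hn]
      rw [htake]
      have hconcat : iterSteps ((List.ofFn xs).take k ++ [xs n]) lam
          = stepC (xs n) (iterSteps ((List.ofFn xs).take k) lam) := by
        simp [iterSteps, List.foldl_concat]
      rw [hconcat, hiter lam hne hs]
      have hhd : ∀ b ∈ lam, b ≤ lam.headI := sorted_le_headI hs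
      have hmv : mvalL (es.map (lam.headI + ·) ++ lam) (xs n) = lam.headI + Dv M (xs n) es :=
        mval_formula (M : EReal) hM0 (xs n) (hbound n) (α n) (hα n).1 (hα n).2.1
          es hmem (by rw [hlen]; exact htri n) lam hne hhd
      show List.orderedInsert (· ≥ ·) (mvalL (es.map (lam.headI + ·) ++ lam) (xs n))
          (es.map (lam.headI + ·) ++ lam) = _
      rw [hmv]
      exact insertMap lam.headI _ (le_trans hM0 (M_le_Dv _ _ _)) es hsort lam hhd

end Aux

/-- renovation property of triangular words. If each weight sequence
`xs n` has entries in `[-∞, M]`, `α n` is the index of the first occurrence of the value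
`M` in `xs n` (indices starting at 1), and the word `α` is triangular (`α n ≤ n+1` for the
0-based position `n`), then for every `1 ≤ i ≤ l` the displacement
`𝔪(Φ_{(xs 1,…,xs (i-1))}(λ), xs i) − λ_1` is a quantity `d ≥ M` not depending on the
configuration `λ`. -/
theorem mgs_renovation_triangular (M : ℝ) (hM : 0 < M) (l : ℕ) (hl : 1 ≤ l)
    (xs : Fin l → (ℕ → EReal))
    (hbound : ∀ n i, xs n i ≤ (M : EReal))
    (α : Fin l → ℕ)
    (hα : ∀ n : Fin l, 1 ≤ α n ∧ xs n (α n) = (M : EReal) ∧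
      ∀ j, 1 ≤ j → j < α n → xs n j ≠ (M : EReal))
    (htri : ∀ n : Fin l, α n ≤ (n : ℕ) + 1) :
    ∀ i : Fin l, ∃ d : EReal, (M : EReal) ≤ d ∧
      ∀ lam : List EReal, lam ≠ [] → lam.Pairwise (· ≥ ·) →
        mvalL (iterSteps ((List.ofFn xs).take (i : ℕ)) lam) (xs i) = lam.headI + d := by
  intro i
  obtain ⟨es, hsort, hmem, hlen, hiter⟩ :=
    invariant M hM l xs hbound α hα htri (i : ℕ) i.isLt.le
  have hM0 : (0 : EReal) ≤ (M : EReal) := by exact_mod_cast hM.le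
  refine ⟨Dv M (xs i) es, M_le_Dv _ _ _, ?_⟩
  intro lam hne hs
  rw [hiter lam hne hs]
  exact mval_formula (M : EReal) hM0 (xs i) (hbound i) (α i) (hα i).1 (hα i).2.1
    es hmem (by rw [hlen]; exact htri i) lam hne (sorted_le_headI hs)
end

section
/- Conditional distribution in the renovation process: Let (ξ_n)_{n∈ℤ} be i.i.d. Geometric(p) random variables and for n ≥ 1 define M_n = #{i ∈ {−n+2, …, 1} : ξ_i > i + n − 1}, with M_0 = 0. Then conditionally on M_{n-1}, the random variable M_n has the Binomial(M_{n-1} + 1, 1−p) distribution. -/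
open MeasureTheory ProbabilityTheory

/-- `M_n = #{i ∈ ⟦-n+2, 1⟧ : ξ_i > i + n - 1}` (so `M_0 = 0`, the index interval being
empty). -/
noncomputable def Mcount {Ω : Type*} (ξ : ℤ → Ω → ℕ) (n : ℕ) (ω : Ω) : ℕ :=
  ((Finset.Icc (2 - (n : ℤ)) 1).filter (fun i => i + (n : ℤ) - 1 < (ξ i ω : ℤ))).card

section
variable {Ω : Type*} [MeasurableSpace Ω] {P : Measure Ω} {ξ : ℤ → Ω → ℕ}

lemma aux_prod (hindep : iIndepFun ξ P)
    (I : Finset ℤ) (D : ℤ → Set ℕ) :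
    P (⋂ i ∈ I, ξ i ⁻¹' D i) = ∏ i ∈ I, P (ξ i ⁻¹' D i) :=
  hindep.meas_biInter (fun i _ => ⟨D i, MeasurableSet.of_discrete, rfl⟩)

lemma tail_prob {p : ℝ} (hp0 : 0 < p) (hp1 : p ≤ 1) [IsProbabilityMeasure P]
    (hmeas : ∀ m, Measurable (ξ m))
    (hlaw : ∀ m : ℤ, ∀ j : ℕ, 1 ≤ j →
      P {ω | ξ m ω = j} = ENNReal.ofReal (p * (1 - p) ^ (j - 1)))
    (i : ℤ) (t : ℕ) : P {ω | t < ξ i ω} = ENNReal.ofReal ((1 - p) ^ t) := by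
  have hq0 : 0 ≤ 1 - p := by linarith
  have hq1 : 1 - p < 1 := by linarith
  have hset : {ω | t < ξ i ω} = ⋃ j : ℕ, ξ i ⁻¹' {t + 1 + j} := by
    ext ω; simp only [Set.mem_setOf_eq, Set.mem_iUnion, Set.mem_preimage, Set.mem_singleton_iff]
    constructor
    · intro h; exact ⟨ξ i ω - (t+1), by omega⟩
    · rintro ⟨j, hj⟩; omega
  rw [hset, measure_iUnion]
  · have hterm : ∀ j : ℕ, P (ξ i ⁻¹' {t + 1 + j}) = ENNReal.ofReal ((p * (1-p)^t) * (1-p)^j) := by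
      intro j
      have := hlaw i (t + 1 + j) (by omega)
      rw [show ξ i ⁻¹' {t+1+j} = {ω | ξ i ω = t+1+j} from rfl, this]
      congr 1
      rw [show t + 1 + j - 1 = t + j by omega, pow_add]; ring
    simp_rw [hterm]
    rw [← ENNReal.ofReal_tsum_of_nonneg (fun j => by positivity)
        (by simpa using (summable_geometric_of_lt_one hq0 hq1).mul_left (p * (1-p)^t))]
    rw [tsum_mul_left, tsum_geometric_of_lt_one hq0 hq1]
    congr 1
    rw [sub_sub_cancel, mul_right_comm, mul_inv_cancel₀ hp0.ne', one_mul]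
  · intro j j' hjj'
    simp only [Function.onFun, Set.disjoint_left, Set.mem_preimage, Set.mem_singleton_iff]
    intro ω h1 h2; omega
  · intro j; exact hmeas i (measurableSet_singleton _)

lemma le_prob {p : ℝ} (hp0 : 0 < p) (hp1 : p ≤ 1) [IsProbabilityMeasure P]
    (hmeas : ∀ m, Measurable (ξ m))
    (hlaw : ∀ m : ℤ, ∀ j : ℕ, 1 ≤ j →
      P {ω | ξ m ω = j} = ENNReal.ofReal (p * (1 - p) ^ (j - 1)))
    (i : ℤ) (t : ℕ) : P {ω | ¬ t < ξ i ω} = ENNReal.ofReal (1 - (1 - p) ^ t) := by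
  have hq0 : 0 ≤ 1 - p := by linarith
  have h1 : (1-p)^t ≤ 1 := pow_le_one₀ hq0 (by linarith)
  have : {ω | ¬ t < ξ i ω} = {ω | t < ξ i ω}ᶜ := by ext; simp
  have hms : MeasurableSet {ω | t < ξ i ω} :=
    hmeas i (MeasurableSet.of_discrete : MeasurableSet {x | t < x})
  rw [this, measure_compl hms (measure_ne_top _ _), measure_univ, tail_prob hp0 hp1 hmeas hlaw i t,
    ENNReal.ofReal_sub 1 (by positivity), ENNReal.ofReal_one]
end


lemma prod_split (p : ℝ) (J : Finset ℤ) (r : ℤ → ℝ) (S : Finset ℤ) (hS : S ⊆ J)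
    (T : Finset ℤ) (hT : T ⊆ J) :
    (∏ i ∈ J, (if i ∈ T then (if i ∈ S then (1-p) * r i else 0)
                  else (if i ∈ S then p * r i else 1 - r i)))
    = if T ⊆ S then (∏ i ∈ J, (if i ∈ S then r i else 1 - r i)) *
        ((1-p) ^ T.card * p ^ (S.card - T.card)) else 0 := by
  by_cases hTS : T ⊆ S
  · rw [if_pos hTS]
    have key : ∀ (f : ℤ → ℝ), ∏ i ∈ J, f i = (∏ i ∈ J \ S, f i) * ∏ i ∈ S, f i :=
      fun f => (Finset.prod_sdiff hS).symm
    rw [key, key]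
    have h1 : ∀ i ∈ J \ S, (if i ∈ T then (if i ∈ S then (1-p) * r i else 0)
                  else (if i ∈ S then p * r i else 1 - r i)) = 1 - r i := by
      intro i hi
      rw [Finset.mem_sdiff] at hi
      rw [if_neg (fun h => hi.2 (hTS h)), if_neg hi.2]
    have h2 : ∀ i ∈ J \ S, (if i ∈ S then r i else 1 - r i) = 1 - r i := by
      intro i hi; rw [Finset.mem_sdiff] at hi; rw [if_neg hi.2]
    have h3 : ∀ i ∈ S, (if i ∈ T then (if i ∈ S then (1-p) * r i else 0)
                  else (if i ∈ S then p * r i else 1 - r i))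
              = (if i ∈ T then (1-p) else p) * r i := by
      intro i hi
      by_cases h : i ∈ T <;> simp [h, hi]
    have h4 : ∀ i ∈ S, (if i ∈ S then r i else 1 - r i) = r i := fun i hi => if_pos hi
    rw [Finset.prod_congr rfl h1, Finset.prod_congr rfl h2, Finset.prod_congr rfl h3,
      Finset.prod_congr rfl h4, Finset.prod_mul_distrib]
    have h5 : ∏ i ∈ S, (if i ∈ T then (1-p) else p) = (1-p) ^ T.card * p ^ (S.card - T.card) := by
      rw [← Finset.prod_sdiff hTS]
      rw [Finset.prod_congr rfl (fun i hi => if_neg (Finset.mem_sdiff.mp hi).2),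
        Finset.prod_congr rfl (fun i hi => if_pos hi), Finset.prod_const, Finset.prod_const,
        Finset.card_sdiff_of_subset hTS]
      ring
    rw [h5]; ring
  · rw [if_neg hTS]
    obtain ⟨i, hiT, hiS⟩ := Finset.not_subset.mp hTS
    exact Finset.prod_eq_zero (hT hiT) (by rw [if_pos hiT, if_neg hiS])

lemma sum_binom (p : ℝ) (J : Finset ℤ) (a : ℤ) (ha : a ∉ J) (r : ℤ → ℝ) (m k : ℕ) :
    ∑ T ∈ (insert a J).powersetCard k, ∑ S ∈ J.powersetCard m,
      ((if a ∈ T then 1 - p else p) *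
        ∏ i ∈ J, (if i ∈ T then (if i ∈ S then (1-p) * r i else 0)
                  else (if i ∈ S then p * r i else 1 - r i)))
    = (∑ S ∈ J.powersetCard m, ∏ i ∈ J, (if i ∈ S then r i else 1 - r i)) *
        (((m+1).choose k : ℝ) * (1-p)^k * p^(m+1-k)) := by
  rw [Finset.sum_comm, Finset.sum_mul]
  refine Finset.sum_congr rfl (fun S hS => ?_)
  rw [Finset.mem_powersetCard] at hS
  obtain ⟨hSJ, hSm⟩ := hS
  -- key inner sum over T
  have inner : ∀ j : ℕ, ∑ T ∈ J.powersetCard j,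
      (∏ i ∈ J, (if i ∈ T then (if i ∈ S then (1-p) * r i else 0)
                  else (if i ∈ S then p * r i else 1 - r i)))
      = (m.choose j : ℝ) * ((∏ i ∈ J, (if i ∈ S then r i else 1 - r i)) *
          ((1-p) ^ j * p ^ (m - j))) := by
    intro j
    have : ∀ T ∈ J.powersetCard j,
        (∏ i ∈ J, (if i ∈ T then (if i ∈ S then (1-p) * r i else 0)
                  else (if i ∈ S then p * r i else 1 - r i)))
        = if T ⊆ S then ((∏ i ∈ J, (if i ∈ S then r i else 1 - r i)) *
            ((1-p) ^ j * p ^ (m - j))) else 0 := by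
      intro T hT
      rw [Finset.mem_powersetCard] at hT
      rw [prod_split p J r S hSJ T hT.1, hT.2, hSm]
    rw [Finset.sum_congr rfl this, ← Finset.sum_filter]
    have hfil : (J.powersetCard j).filter (· ⊆ S) = S.powersetCard j := by
      ext T
      simp only [Finset.mem_filter, Finset.mem_powersetCard]
      exact ⟨fun h => ⟨h.2, h.1.2⟩, fun h => ⟨⟨h.1.trans hSJ, h.2⟩, h.1⟩⟩
    rw [hfil, Finset.sum_const, Finset.card_powersetCard, hSm, nsmul_eq_mul]
  cases k with
  | zero =>
    have h0 := inner 0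
    rw [Finset.powersetCard_zero, Finset.sum_singleton] at h0 ⊢
    simp only [Finset.notMem_empty, if_false] at h0 ⊢
    rw [h0]
    simp only [Nat.choose_zero_right, Nat.sub_zero, pow_zero, Nat.cast_one]
    rw [show m + 1 = m + 1 from rfl, pow_succ]
    ring
  | succ k' =>
    rw [Finset.powersetCard_succ_insert ha, Finset.sum_union, Finset.sum_image]
    · have hterm1 : ∀ T ∈ J.powersetCard (k'+1),
          ((if a ∈ T then 1 - p else p) *
            ∏ i ∈ J, (if i ∈ T then (if i ∈ S then (1-p) * r i else 0)
                  else (if i ∈ S then p * r i else 1 - r i)))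
          = p * ∏ i ∈ J, (if i ∈ T then (if i ∈ S then (1-p) * r i else 0)
                  else (if i ∈ S then p * r i else 1 - r i)) := by
        intro T hT
        rw [Finset.mem_powersetCard] at hT
        rw [if_neg (fun h => ha (hT.1 h))]
      have hterm2 : ∀ T ∈ J.powersetCard k',
          ((if a ∈ insert a T then 1 - p else p) *
            ∏ i ∈ J, (if i ∈ insert a T then (if i ∈ S then (1-p) * r i else 0)
                  else (if i ∈ S then p * r i else 1 - r i)))
          = (1-p) * ∏ i ∈ J, (if i ∈ T then (if i ∈ S then (1-p) * r i else 0)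
                  else (if i ∈ S then p * r i else 1 - r i)) := by
        intro T hT
        rw [if_pos (Finset.mem_insert_self a T)]
        congr 1
        refine Finset.prod_congr rfl (fun i hi => ?_)
        by_cases hiT : i ∈ T
        · rw [if_pos (Finset.mem_insert_of_mem hiT), if_pos hiT]
        · rw [if_neg (fun h => (Finset.mem_insert.mp h).elim (fun e => ha (by rwa [e] at hi)) hiT),
            if_neg hiT]
      rw [Finset.sum_congr rfl hterm1, Finset.sum_congr rfl hterm2, ← Finset.mul_sum,
        ← Finset.mul_sum, inner (k'+1), inner k']
      -- now pure arithmetic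
      by_cases hk : k' + 1 ≤ m
      · rw [Nat.choose_succ_succ' m k', show m + 1 - (k'+1) = m - (k'+1) + 1 by omega,
          show m - k' = m - (k'+1) + 1 by omega]
        push_cast
        ring
      · by_cases hk2 : k' = m
        · subst hk2
          rw [Nat.choose_succ_succ' k' k', Nat.choose_self, Nat.choose_succ_self, Nat.sub_self,
            show k' + 1 - (k' + 1) = 0 by omega, show k' - (k'+1) = 0 by omega]
          push_cast
          ring
        · rw [Nat.choose_succ_succ' m k', Nat.choose_eq_zero_of_lt (show m < k' + 1 by omega),
            Nat.choose_eq_zero_of_lt (show m < k' by omega)]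
          push_cast
          ring
    · intro T hT T' hT' h
      have h1 : a ∉ T := fun hh => ha ((Finset.mem_powersetCard.mp hT).1 hh)
      have h2 : a ∉ T' := fun hh => ha ((Finset.mem_powersetCard.mp hT').1 hh)
      rw [← Finset.erase_insert h1, ← Finset.erase_insert h2, h]
    · rw [Finset.disjoint_right]
      intro T hT hT'
      rw [Finset.mem_image] at hT
      obtain ⟨T', _, rfl⟩ := hT
      rw [Finset.mem_powersetCard] at hT'
      exact ha (hT'.1 (Finset.mem_insert_self a T'))

section
variable {Ω : Type*} [MeasurableSpace Ω] {P : Measure Ω} {ξ : ℤ → Ω → ℕ} {p : ℝ}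

lemma coord_two (hp0 : 0 < p) (hp1 : p ≤ 1) [IsProbabilityMeasure P]
    (hmeas : ∀ m, Measurable (ξ m))
    (hlaw : ∀ m : ℤ, ∀ j : ℕ, 1 ≤ j →
      P {ω | ξ m ω = j} = ENNReal.ofReal (p * (1 - p) ^ (j - 1)))
    (T S J : Finset ℤ) (t : ℤ → ℕ) (i : ℤ) (hiJ : i ∈ J) :
    P (ξ i ⁻¹' {x : ℕ | (t i + 1 < x ↔ i ∈ T) ∧ (i ∈ J → (t i < x ↔ i ∈ S))})
      = ENNReal.ofReal (if i ∈ T then (if i ∈ S then (1-p) * (1-p)^(t i) else 0)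
          else (if i ∈ S then p * (1-p)^(t i) else 1 - (1-p)^(t i))) := by
  by_cases hiT : i ∈ T <;> by_cases hiS : i ∈ S
  · rw [if_pos hiT, if_pos hiS]
    have hs : ξ i ⁻¹' {x : ℕ | (t i + 1 < x ↔ i ∈ T) ∧ (i ∈ J → (t i < x ↔ i ∈ S))}
        = {ω | t i + 1 < ξ i ω} := by
      ext ω; simp only [Set.mem_preimage, Set.mem_setOf_eq, hiT, hiS, hiJ, iff_true, forall_true_left]
      omega
    rw [hs, tail_prob hp0 hp1 hmeas hlaw i (t i + 1), pow_succ]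
    congr 1; ring
  · rw [if_pos hiT, if_neg hiS]
    have hs : ξ i ⁻¹' {x : ℕ | (t i + 1 < x ↔ i ∈ T) ∧ (i ∈ J → (t i < x ↔ i ∈ S))}
        = ∅ := by
      ext ω; simp only [Set.mem_preimage, Set.mem_setOf_eq, hiT, hiS, hiJ, iff_true, iff_false,
        forall_true_left, Set.mem_empty_iff_false]
      omega
    rw [hs]; simp
  · rw [if_neg hiT, if_pos hiS]
    have hs : ξ i ⁻¹' {x : ℕ | (t i + 1 < x ↔ i ∈ T) ∧ (i ∈ J → (t i < x ↔ i ∈ S))}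
        = {ω | ξ i ω = t i + 1} := by
      ext ω; simp only [Set.mem_preimage, Set.mem_setOf_eq, hiT, hiS, hiJ, iff_true, iff_false,
        forall_true_left]
      omega
    rw [hs, hlaw i (t i + 1) (by omega)]
    simp
  · rw [if_neg hiT, if_neg hiS]
    have hs : ξ i ⁻¹' {x : ℕ | (t i + 1 < x ↔ i ∈ T) ∧ (i ∈ J → (t i < x ↔ i ∈ S))}
        = {ω | ¬ t i < ξ i ω} := by
      ext ω; simp only [Set.mem_preimage, Set.mem_setOf_eq, hiT, hiS, hiJ, iff_false,
        forall_true_left]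
      omega
    rw [hs, le_prob hp0 hp1 hmeas hlaw i (t i)]

lemma coord_a (hp0 : 0 < p) (hp1 : p ≤ 1) [IsProbabilityMeasure P]
    (hmeas : ∀ m, Measurable (ξ m))
    (hlaw : ∀ m : ℤ, ∀ j : ℕ, 1 ≤ j →
      P {ω | ξ m ω = j} = ENNReal.ofReal (p * (1 - p) ^ (j - 1)))
    (T S J : Finset ℤ) (t : ℤ → ℕ) (a : ℤ) (haJ : a ∉ J) :
    P (ξ a ⁻¹' {x : ℕ | (t a + 1 < x ↔ a ∈ T) ∧ (a ∈ J → (t a < x ↔ a ∈ S))})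
      = ENNReal.ofReal (if a ∈ T then (1-p)^(t a + 1) else 1 - (1-p)^(t a + 1)) := by
  by_cases hiT : a ∈ T
  · rw [if_pos hiT]
    have hs : ξ a ⁻¹' {x : ℕ | (t a + 1 < x ↔ a ∈ T) ∧ (a ∈ J → (t a < x ↔ a ∈ S))}
        = {ω | t a + 1 < ξ a ω} := by
      ext ω; simp [hiT, haJ]
    rw [hs, tail_prob hp0 hp1 hmeas hlaw a (t a + 1)]
  · rw [if_neg hiT]
    have hs : ξ a ⁻¹' {x : ℕ | (t a + 1 < x ↔ a ∈ T) ∧ (a ∈ J → (t a < x ↔ a ∈ S))}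
        = {ω | ¬ t a + 1 < ξ a ω} := by
      ext ω; simp [hiT, haJ]
    rw [hs, le_prob hp0 hp1 hmeas hlaw a (t a + 1)]

lemma coord_one (hp0 : 0 < p) (hp1 : p ≤ 1) [IsProbabilityMeasure P]
    (hmeas : ∀ m, Measurable (ξ m))
    (hlaw : ∀ m : ℤ, ∀ j : ℕ, 1 ≤ j →
      P {ω | ξ m ω = j} = ENNReal.ofReal (p * (1 - p) ^ (j - 1)))
    (S : Finset ℤ) (t : ℤ → ℕ) (i : ℤ) :
    P (ξ i ⁻¹' {x : ℕ | t i < x ↔ i ∈ S})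
      = ENNReal.ofReal (if i ∈ S then (1-p)^(t i) else 1 - (1-p)^(t i)) := by
  by_cases hiS : i ∈ S
  · rw [if_pos hiS]
    have hs : ξ i ⁻¹' {x : ℕ | t i < x ↔ i ∈ S} = {ω | t i < ξ i ω} := by
      ext ω; simp [hiS]
    rw [hs, tail_prob hp0 hp1 hmeas hlaw i (t i)]
  · rw [if_neg hiS]
    have hs : ξ i ⁻¹' {x : ℕ | t i < x ↔ i ∈ S} = {ω | ¬ t i < ξ i ω} := by
      ext ω; simp [hiS]
    rw [hs, le_prob hp0 hp1 hmeas hlaw i (t i)]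
end


lemma filter_eq_iff' {I T : Finset ℤ} (hT : T ⊆ I) (c : ℤ → Prop) [DecidablePred c] :
    I.filter c = T ↔ ∀ i ∈ I, (c i ↔ i ∈ T) := by
  constructor
  · intro h i hi; rw [← h]; simp [Finset.mem_filter, hi]
  · intro h; ext i; simp only [Finset.mem_filter]
    exact ⟨fun ⟨hi, hc⟩ => (h i hi).mp hc, fun hiT => ⟨hT hiT, (h i (hT hiT)).mpr hiT⟩⟩

section
variable {Ω : Type*} [MeasurableSpace Ω] {P : Measure Ω} {ξ : ℤ → Ω → ℕ} {p : ℝ}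

-- partition of a joint event into per-configuration events
lemma joint_partition [IsProbabilityMeasure P] (hmeas : ∀ m, Measurable (ξ m))
    (J : Finset ℤ) (a : ℤ) (haJ : a ∉ J) (t : ℤ → ℕ) (k m : ℕ) :
    P {ω | (((insert a J).filter (fun i => t i + 1 < ξ i ω)).card = k ∧
        (J.filter (fun i => t i < ξ i ω)).card = m)}
      = ∑ T ∈ (insert a J).powersetCard k, ∑ S ∈ J.powersetCard m,
          P (⋂ i ∈ insert a J,
            ξ i ⁻¹' {x : ℕ | (t i + 1 < x ↔ i ∈ T) ∧ (i ∈ J → (t i < x ↔ i ∈ S))}) := by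
  have hE : ∀ T, T ⊆ insert a J → ∀ S, S ⊆ J → ∀ ω : Ω,
      (((insert a J).filter (fun i => t i + 1 < ξ i ω) = T ∧
        J.filter (fun i => t i < ξ i ω) = S) ↔
      ∀ i ∈ insert a J,
        ξ i ω ∈ {x : ℕ | (t i + 1 < x ↔ i ∈ T) ∧ (i ∈ J → (t i < x ↔ i ∈ S))}) := by
    intro T hT S hS ω
    rw [filter_eq_iff' hT, filter_eq_iff' hS]
    constructor
    · rintro ⟨h1, h2⟩ i hi
      exact ⟨h1 i hi, fun hiJ => h2 i hiJ⟩
    · intro h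
      exact ⟨fun i hi => (h i hi).1, fun i hiJ => (h i (Finset.mem_insert_of_mem hiJ)).2 hiJ⟩
  have hkey : {ω | (((insert a J).filter (fun i => t i + 1 < ξ i ω)).card = k ∧
        (J.filter (fun i => t i < ξ i ω)).card = m)}
      = ⋃ x ∈ ((insert a J).powersetCard k ×ˢ J.powersetCard m), ⋂ i ∈ insert a J,
          ξ i ⁻¹' {y : ℕ | (t i + 1 < y ↔ i ∈ x.1) ∧ (i ∈ J → (t i < y ↔ i ∈ x.2))} := by
    ext ω
    simp only [Set.mem_setOf_eq, Set.mem_iUnion, exists_prop, Finset.mem_product,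
      Set.mem_iInter, Set.mem_preimage, Finset.mem_powersetCard]
    constructor
    · rintro ⟨h1, h2⟩
      refine ⟨((insert a J).filter (fun i => t i + 1 < ξ i ω),
        J.filter (fun i => t i < ξ i ω)),
        ⟨⟨Finset.filter_subset _ _, h1⟩, ⟨Finset.filter_subset _ _, h2⟩⟩, ?_⟩
      exact (hE _ (Finset.filter_subset _ _) _ (Finset.filter_subset _ _) ω).mp ⟨rfl, rfl⟩
    · rintro ⟨⟨T, S⟩, ⟨⟨hT, hTk⟩, ⟨hS, hSm⟩⟩, h⟩
      have h2 := (hE T hT S hS ω).mpr h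
      rw [h2.1, h2.2]
      exact ⟨hTk, hSm⟩
  rw [hkey, measure_biUnion_finset, Finset.sum_product]
  · intro x hx y hy hxy
    simp only [Finset.mem_coe, Finset.mem_product, Finset.mem_powersetCard] at hx hy
    rw [Function.onFun, Set.disjoint_left]
    intro ω hω hω'
    apply hxy
    rw [Set.mem_iInter₂] at hω hω'
    have h1 := (hE x.1 hx.1.1 x.2 hx.2.1 ω).mpr hω
    have h2 := (hE y.1 hy.1.1 y.2 hy.2.1 ω).mpr hω'
    exact Prod.ext (h1.1 ▸ h2.1 ▸ rfl) (h1.2 ▸ h2.2 ▸ rfl)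
  · intro b _
    exact MeasurableSet.biInter (Set.to_countable _)
      (fun i _ => hmeas i MeasurableSet.of_discrete)

lemma single_partition [IsProbabilityMeasure P] (hmeas : ∀ m, Measurable (ξ m))
    (J : Finset ℤ) (t : ℤ → ℕ) (m : ℕ) :
    P {ω | (J.filter (fun i => t i < ξ i ω)).card = m}
      = ∑ S ∈ J.powersetCard m, P (⋂ i ∈ J, ξ i ⁻¹' {x : ℕ | t i < x ↔ i ∈ S}) := by
  have hkey : {ω | (J.filter (fun i => t i < ξ i ω)).card = m}
      = ⋃ S ∈ J.powersetCard m, ⋂ i ∈ J, ξ i ⁻¹' {x : ℕ | t i < x ↔ i ∈ S} := by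
    ext ω
    simp only [Set.mem_setOf_eq, Set.mem_iUnion, exists_prop, Set.mem_iInter,
      Set.mem_preimage, Finset.mem_powersetCard]
    constructor
    · intro h1
      refine ⟨J.filter (fun i => t i < ξ i ω), ⟨Finset.filter_subset _ _, h1⟩, ?_⟩
      exact fun i hi =>
        (filter_eq_iff' (Finset.filter_subset (fun i => t i < ξ i ω) J)
          (fun i => t i < ξ i ω)).mp rfl i hi
    · rintro ⟨S, ⟨hS, hSm⟩, h⟩
      rw [(filter_eq_iff' hS _).mpr h]
      exact hSm
  rw [hkey, measure_biUnion_finset]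
  · intro x hx y hy hxy
    simp only [Finset.mem_coe, Finset.mem_powersetCard] at hx hy
    rw [Function.onFun, Set.disjoint_left]
    intro ω hω hω'
    apply hxy
    rw [Set.mem_iInter₂] at hω hω'
    rw [← (filter_eq_iff' hx.1 _).mpr hω, ← (filter_eq_iff' hy.1 _).mpr hω']
  · intro b _
    exact MeasurableSet.biInter (Set.to_countable _)
      (fun i _ => hmeas i MeasurableSet.of_discrete)
end


/-- for i.i.d. Geometric(p) variables `ξ`, conditionally on `M_{n-1}` the
variable `M_n` is Binomial(`M_{n-1} + 1`, `1-p`):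
`P(M_n = k, M_{n-1} = m) = P(M_{n-1} = m) · C(m+1, k) (1-p)^k p^{m+1-k}`. -/
theorem Mcount_conditional_binomial (p : ℝ) (hp0 : 0 < p) (hp1 : p ≤ 1)
    {Ω : Type*} [MeasurableSpace Ω] (P : Measure Ω) [IsProbabilityMeasure P]
    (ξ : ℤ → Ω → ℕ) (hmeas : ∀ m, Measurable (ξ m))
    (hlaw : ∀ m : ℤ, ∀ j : ℕ, 1 ≤ j →
      P {ω | ξ m ω = j} = ENNReal.ofReal (p * (1 - p) ^ (j - 1)))
    (hindep : iIndepFun ξ P) :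
    ∀ n : ℕ, 1 ≤ n → ∀ m k : ℕ,
      P {ω | Mcount ξ n ω = k ∧ Mcount ξ (n - 1) ω = m} =
        P {ω | Mcount ξ (n - 1) ω = m} *
          ENNReal.ofReal (((m + 1).choose k : ℝ) * (1 - p) ^ k * p ^ (m + 1 - k)) := by
  intro n hn m k
  obtain ⟨n', rfl⟩ : ∃ n', n = n' + 1 := ⟨n - 1, by omega⟩
  rw [Nat.add_sub_cancel]
  have hq0 : 0 ≤ 1 - p := by linarith
  set J : Finset ℤ := Finset.Icc (2 - (n' : ℤ)) 1 with hJdef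
  set a : ℤ := 1 - (n' : ℤ) with hadef
  set t : ℤ → ℕ := fun i => (i + (n' : ℤ) - 1).toNat with htdef
  have haJ : a ∉ J := by
    simp only [hJdef, Finset.mem_Icc]
    omega
  have hIfull : Finset.Icc (2 - ((n' + 1 : ℕ) : ℤ)) 1 = insert a J := by
    ext i
    simp only [hJdef, Finset.mem_Icc, Finset.mem_insert]
    push_cast
    omega
  have hta : t a = 0 := by simp only [htdef, hadef]; omega
  have hc1 : ∀ ω : Ω, ∀ i ∈ insert a J,
      ((i + ((n' + 1 : ℕ) : ℤ) - 1 < (ξ i ω : ℤ)) ↔ (t i + 1 < ξ i ω)) := by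
    intro ω i hi
    simp only [Finset.mem_insert, hJdef, Finset.mem_Icc] at hi
    simp only [htdef]
    push_cast
    omega
  have hc2 : ∀ ω : Ω, ∀ i ∈ J,
      ((i + ((n' : ℕ) : ℤ) - 1 < (ξ i ω : ℤ)) ↔ (t i < ξ i ω)) := by
    intro ω i hi
    simp only [hJdef, Finset.mem_Icc] at hi
    simp only [htdef]
    omega
  have hf1 : ∀ ω : Ω, (Finset.Icc (2 - ((n' + 1 : ℕ) : ℤ)) 1).filter
        (fun i => i + ((n' + 1 : ℕ) : ℤ) - 1 < (ξ i ω : ℤ))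
      = (insert a J).filter (fun i => t i + 1 < ξ i ω) := by
    intro ω
    rw [hIfull]
    exact Finset.filter_congr (fun i hi => hc1 ω i hi)
  have hf2 : ∀ ω : Ω, (Finset.Icc (2 - ((n' : ℕ) : ℤ)) 1).filter
        (fun i => i + ((n' : ℕ) : ℤ) - 1 < (ξ i ω : ℤ))
      = J.filter (fun i => t i < ξ i ω) := by
    intro ω
    exact Finset.filter_congr (fun i hi => hc2 ω i hi)
  have hset1 : {ω | Mcount ξ (n' + 1) ω = k ∧ Mcount ξ n' ω = m}
      = {ω | (((insert a J).filter (fun i => t i + 1 < ξ i ω)).card = k ∧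
          (J.filter (fun i => t i < ξ i ω)).card = m)} := by
    ext ω
    simp only [Mcount, Set.mem_setOf_eq]
    rw [hf1 ω, hf2 ω]
  have hset2 : {ω | Mcount ξ n' ω = m}
      = {ω | (J.filter (fun i => t i < ξ i ω)).card = m} := by
    ext ω
    simp only [Mcount, Set.mem_setOf_eq]
    rw [hf2 ω]
  rw [hset1, hset2, joint_partition hmeas J a haJ t k m, single_partition hmeas J t m]
  -- nonnegativity of per-coordinate values
  have hnn : ∀ (T S : Finset ℤ) (i : ℤ),
      0 ≤ (if i ∈ T then (if i ∈ S then (1-p) * (1-p)^(t i) else 0)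
          else (if i ∈ S then p * (1-p)^(t i) else 1 - (1-p)^(t i))) := by
    intro T S i
    by_cases h1 : i ∈ T <;> by_cases h2 : i ∈ S <;>
      simp only [h1, h2, if_true, if_false]
    · exact mul_nonneg hq0 (pow_nonneg hq0 _)
    · exact le_refl 0
    · exact mul_nonneg hp0.le (pow_nonneg hq0 _)
    · exact sub_nonneg.mpr (pow_le_one₀ hq0 (by linarith))
  have hnn2 : ∀ (S : Finset ℤ) (i : ℤ),
      0 ≤ (if i ∈ S then (1-p)^(t i) else 1 - (1-p)^(t i)) := by
    intro S i
    by_cases h2 : i ∈ S <;> simp only [h2, if_true, if_false]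
    · exact pow_nonneg hq0 _
    · exact sub_nonneg.mpr (pow_le_one₀ hq0 (by linarith))
  -- evaluate each joint term
  have hterm : ∀ T ∈ (insert a J).powersetCard k, ∀ S ∈ J.powersetCard m,
      P (⋂ i ∈ insert a J,
          ξ i ⁻¹' {x : ℕ | (t i + 1 < x ↔ i ∈ T) ∧ (i ∈ J → (t i < x ↔ i ∈ S))})
      = ENNReal.ofReal ((if a ∈ T then 1 - p else p) *
          ∏ i ∈ J, (if i ∈ T then (if i ∈ S then (1-p) * (1-p)^(t i) else 0)
            else (if i ∈ S then p * (1-p)^(t i) else 1 - (1-p)^(t i)))) := by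
    intro T _ S _
    rw [aux_prod hindep (insert a J)
        (fun i => {x : ℕ | (t i + 1 < x ↔ i ∈ T) ∧ (i ∈ J → (t i < x ↔ i ∈ S))}),
      Finset.prod_insert haJ,
      coord_a hp0 hp1 hmeas hlaw T S J t a haJ,
      Finset.prod_congr rfl (fun i hi => coord_two hp0 hp1 hmeas hlaw T S J t i hi),
      ← ENNReal.ofReal_prod_of_nonneg (fun i _ => hnn T S i),
      ← ENNReal.ofReal_mul (by
        by_cases h : a ∈ T
        · simp only [h, if_true]
          exact pow_nonneg hq0 _
        · simp only [h, if_false]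
          have := pow_le_one₀ hq0 (show (1:ℝ) - p ≤ 1 by linarith) (n := t a + 1)
          linarith)]
    congr 1
    rw [hta]
    by_cases h : a ∈ T <;> simp [h]
  have hterm2 : ∀ S ∈ J.powersetCard m,
      P (⋂ i ∈ J, ξ i ⁻¹' {x : ℕ | t i < x ↔ i ∈ S})
      = ENNReal.ofReal (∏ i ∈ J, (if i ∈ S then (1-p)^(t i) else 1 - (1-p)^(t i))) := by
    intro S _
    rw [aux_prod hindep J (fun i => {x : ℕ | t i < x ↔ i ∈ S}),
      Finset.prod_congr rfl (fun i _ => coord_one hp0 hp1 hmeas hlaw S t i),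
      ← ENNReal.ofReal_prod_of_nonneg (fun i _ => hnn2 S i)]
  rw [Finset.sum_congr rfl (fun T hT => Finset.sum_congr rfl (fun S hS => hterm T hT S hS)),
    Finset.sum_congr rfl hterm2]
  rw [Finset.sum_congr rfl (fun T _ =>
    (ENNReal.ofReal_sum_of_nonneg (fun S _ => mul_nonneg
      (by by_cases h : a ∈ T <;> simp [h] <;> linarith)
      (Finset.prod_nonneg (fun i _ => hnn T _ i)))).symm)]
  rw [← ENNReal.ofReal_sum_of_nonneg (fun T _ => Finset.sum_nonneg (fun S _ => mul_nonneg
      (by by_cases h : a ∈ T <;> simp [h] <;> linarith)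
      (Finset.prod_nonneg (fun i _ => hnn T _ i))))]
  rw [← ENNReal.ofReal_sum_of_nonneg (fun S _ =>
      Finset.prod_nonneg (fun i _ => hnn2 S i))]
  have hsb := sum_binom p J a haJ (fun i => (1-p)^(t i)) m k
  rw [hsb, ENNReal.ofReal_mul (Finset.sum_nonneg (fun S _ =>
      Finset.prod_nonneg (fun i _ => hnn2 S i)))]
end

section
/- The random time T_past = inf{n ∈ ℕ : M_n = 0}, where (M_n) is a Galton–Watson process with Bernoulli(1−p) offspring distribution and Bernoulli(1−p) immigration at each step (started at M_0 = 0), has finite exponential moments: for every p ∈ (0,1] there exists ρ_p > 1 such that E[ρ_p^{T_past}] < ∞. -/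
open MeasureTheory ProbabilityTheory

noncomputable def Tpast {Ω : Type*} (ξ : ℤ → Ω → ℕ) (ω : Ω) : ℕ :=
  sInf {n : ℕ | 1 ≤ n ∧ Mcount ξ n ω = 0}

namespace TpastAux

open Finset

/-- deterministic version of `Mcount` -/
noncomputable def Mfun (η : ℤ → ℕ) (n : ℕ) : ℕ :=
  ((Finset.Icc (2 - (n : ℤ)) 1).filter (fun i => i + (n : ℤ) - 1 < (η i : ℤ))).card

lemma Mcount_eq_Mfun {Ω : Type*} (ξ : ℤ → Ω → ℕ) (n : ℕ) (ω : Ω) :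
    Mcount ξ n ω = Mfun (fun i => ξ i ω) n := rfl

lemma Mfun_congr {η η' : ℤ → ℕ} {n : ℕ}
    (h : ∀ i ∈ Finset.Icc (2 - (n:ℤ)) 1, η i = η' i) : Mfun η n = Mfun η' n := by
  unfold Mfun
  congr 1
  apply Finset.filter_congr
  intro i hi
  rw [h i hi]

lemma Mfun_eq_zero_iff {η : ℤ → ℕ} {n : ℕ} :
    Mfun η n = 0 ↔ ∀ i ∈ Finset.Icc (2 - (n:ℤ)) 1, (η i : ℤ) ≤ i + n - 1 := by
  unfold Mfun
  rw [Finset.card_eq_zero, Finset.filter_eq_empty_iff]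
  simp [not_lt]

/-- the real product `u N = ∏_{j=1}^N (1 - q^j)`, `q = 1-p`. -/
noncomputable def uprod (p : ℝ) (N : ℕ) : ℝ := ∏ j ∈ Finset.range N, (1 - (1-p)^(j+1))

section RealFacts

variable {p : ℝ} (hp0 : 0 < p) (hp1 : p ≤ 1)

lemma qpow_lt_one (hp0 : 0 < p) (hp1 : p ≤ 1) (j : ℕ) : (1-p)^(j+1) < 1 :=
  pow_lt_one₀ (by linarith) (by linarith) (Nat.succ_ne_zero j)

lemma qpow_nonneg (hp1 : p ≤ 1) (j : ℕ) : 0 ≤ (1-p)^j := pow_nonneg (by linarith) j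

lemma uprod_pos (hp0 : 0 < p) (hp1 : p ≤ 1) (N : ℕ) : 0 < uprod p N := by
  apply Finset.prod_pos
  intro j _
  have := qpow_lt_one hp0 hp1 j
  linarith

lemma uprod_le_one (hp0 : 0 < p) (hp1 : p ≤ 1) (N : ℕ) : uprod p N ≤ 1 := by
  apply Finset.prod_le_one
  · intro j _; have := qpow_lt_one hp0 hp1 j; linarith
  · intro j _; have := qpow_nonneg (p := p) hp1 (j+1); linarith

lemma uprod_anti (hp0 : 0 < p) (hp1 : p ≤ 1) : Antitone (uprod p) := by
  apply antitone_nat_of_succ_le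
  intro n
  have h1 : uprod p (n+1) = uprod p n * (1 - (1-p)^(n+1)) := Finset.prod_range_succ _ n
  have h2 := uprod_pos hp0 hp1 n
  have h3 := qpow_nonneg (p := p) hp1 (n+1)
  nlinarith

/-- geometric tail bound: `∑_{j<d} q^(N+j+1) ≤ q^(N+1)/p` -/
lemma gsum_le (hp0 : 0 < p) (hp1 : p ≤ 1) (N d : ℕ) :
    ∑ j ∈ Finset.range d, (1-p)^(N+j+1) ≤ (1-p)^(N+1) / p := by
  have hq0 : (0:ℝ) ≤ 1 - p := by linarith
  have h1 : ∑ j ∈ Finset.range d, (1-p)^(N+j+1) = (1-p)^(N+1) * ∑ j ∈ Finset.range d, (1-p)^j := by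
    rw [Finset.mul_sum]
    apply Finset.sum_congr rfl
    intro j _
    rw [← pow_add]
    ring_nf
  rw [h1]
  have h2 : ∑ j ∈ Finset.range d, (1-p)^j ≤ 1 / p := by
    have hgm := geom_sum_mul (1-p) d
    have hqd : (0:ℝ) ≤ (1-p)^d := pow_nonneg hq0 d
    rw [le_div_iff₀ hp0]
    nlinarith
  calc (1-p)^(N+1) * ∑ j ∈ Finset.range d, (1-p)^j ≤ (1-p)^(N+1) * (1/p) := by
        apply mul_le_mul_of_nonneg_left h2 (pow_nonneg hq0 _)
    _ = (1-p)^(N+1)/p := by ring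

/-- Weierstrass: `∏_{j<d}(1 - g j) ≥ 1 - ∑ g j` for `0 ≤ g ≤ 1`. -/
lemma weierstrass (g : ℕ → ℝ) (hg : ∀ j, 0 ≤ g j ∧ g j ≤ 1) (d : ℕ) :
    1 - ∑ j ∈ Finset.range d, g j ≤ ∏ j ∈ Finset.range d, (1 - g j) := by
  induction d with
  | zero => simp
  | succ d ih =>
    rw [Finset.sum_range_succ, Finset.prod_range_succ]
    have h1 : 0 ≤ ∑ j ∈ Finset.range d, g j := Finset.sum_nonneg (fun j _ => (hg j).1)
    have h2 := (hg d).1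
    have h3 := (hg d).2
    nlinarith [mul_le_mul_of_nonneg_right ih (by linarith : (0:ℝ) ≤ 1 - g d)]

/-- key lower bound: `uprod p M ≥ uprod p N * (1 - q^(N+1)/p)` for `N ≤ M`. -/
lemma uprod_lower (hp0 : 0 < p) (hp1 : p ≤ 1) {N M : ℕ} (h : N ≤ M) :
    uprod p N * (1 - (1-p)^(N+1)/p) ≤ uprod p M := by
  obtain ⟨d, rfl⟩ := Nat.exists_eq_add_of_le h
  have h1 : uprod p (N + d) = uprod p N * ∏ j ∈ Finset.range d, (1 - (1-p)^(N+j+1)) := by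
    unfold uprod
    rw [Finset.prod_range_add]
  rw [h1]
  have hW := weierstrass (fun j => (1-p)^(N+j+1)) (fun j => ⟨qpow_nonneg (p := p) hp1 _,
    le_of_lt (by simpa using qpow_lt_one hp0 hp1 (N+j))⟩) d
  have hG := gsum_le hp0 hp1 N d
  have hkey : 1 - (1-p)^(N+1)/p ≤ ∏ j ∈ Finset.range d, (1 - (1-p)^(N+j+1)) := by
    refine le_trans (by linarith) hW
  exact mul_le_mul_of_nonneg_left hkey (le_of_lt (uprod_pos hp0 hp1 N))

end RealFacts

section MeasureFacts

open Finset

variable {Ω : Type*} [MeasurableSpace Ω] {P : Measure Ω} [IsProbabilityMeasure P]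
variable {p : ℝ} {ξ : ℤ → Ω → ℕ}

/-- events -/
def Eev (ξ : ℤ → Ω → ℕ) (i : ℤ) (t : ℕ) : Set Ω := {ω | ξ i ω ≤ t}
def Aev (ξ : ℤ → Ω → ℕ) (n : ℕ) : Set Ω := {ω | ∀ j ∈ Finset.Icc 1 n, Mcount ξ j ω ≠ 0}
def Zev (ξ : ℤ → Ω → ℕ) (n : ℕ) : Set Ω := {ω | Mcount ξ n ω = 0}
def Dev (ξ : ℤ → Ω → ℕ) (k : ℕ) : Set Ω := Aev ξ (k-1) ∩ Zev ξ k
def Tail (ξ : ℤ → Ω → ℕ) (N k : ℕ) : Set Ω :=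
  ⋂ i ∈ Finset.Icc (2-(N:ℤ)) (1-(k:ℤ)), Eev ξ i ((i + N - 1).toNat)

lemma meas_zero (hp0 : 0 < p) (hp1 : p ≤ 1) (hmeas : ∀ m, Measurable (ξ m))
    (hlaw : ∀ m : ℤ, ∀ j : ℕ, 1 ≤ j →
      P {ω | ξ m ω = j} = ENNReal.ofReal (p * (1 - p) ^ (j - 1))) (i : ℤ) :
    P {ω | ξ i ω = 0} = 0 := by
  have hq0 : (0:ℝ) ≤ 1 - p := by linarith
  have hq1 : 1 - p < 1 := by linarith
  have hm : ∀ j : ℕ, MeasurableSet (ξ i ⁻¹' {j}) := fun j => (hmeas i) (measurableSet_singleton j)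
  have hdisj : Pairwise (Function.onFun Disjoint fun j : ℕ => ξ i ⁻¹' {j}) := by
    intro a b hab
    simp only [Function.onFun, Set.disjoint_left, Set.mem_preimage, Set.mem_singleton_iff]
    intro ω ha hb
    exact hab (ha ▸ hb ▸ rfl)
  have huniv : (⋃ j : ℕ, ξ i ⁻¹' {j}) = Set.univ := by
    ext ω; simp
  have h1 : ∑' j : ℕ, P (ξ i ⁻¹' {j}) = 1 := by
    rw [← measure_iUnion hdisj hm, huniv, measure_univ]
  rw [tsum_eq_zero_add' ENNReal.summable] at h1
  have h2 : ∑' j : ℕ, P (ξ i ⁻¹' {j + 1}) = 1 := by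
    have he : ∀ j : ℕ, P (ξ i ⁻¹' {j + 1}) = ENNReal.ofReal (p * (1-p)^j) := by
      intro j
      have := hlaw i (j+1) (by omega)
      simp only [Nat.add_sub_cancel] at this; exact this
    rw [tsum_congr he]
    have hsumm : Summable (fun j : ℕ => p * (1-p)^j) :=
      (summable_geometric_of_lt_one hq0 hq1).mul_left p
    rw [← ENNReal.ofReal_tsum_of_nonneg (fun j => by positivity) hsumm]
    rw [tsum_mul_left, tsum_geometric_of_lt_one hq0 hq1]
    have : p * (1 - (1-p))⁻¹ = 1 := by
      rw [sub_sub_cancel, mul_inv_cancel₀ hp0.ne']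
    rw [this, ENNReal.ofReal_one]
  rw [h2] at h1
  have h3 : P (ξ i ⁻¹' {0}) = (P (ξ i ⁻¹' {0}) + 1) - 1 := by
    rw [ENNReal.add_sub_cancel_right ENNReal.one_ne_top]
  have h4 : P (ξ i ⁻¹' {0}) = 0 := by
    rw [h3, h1, tsub_self]
  have h5 : {ω | ξ i ω = 0} = ξ i ⁻¹' {0} := rfl
  rw [h5]; exact h4

lemma meas_Eev (hp0 : 0 < p) (hp1 : p ≤ 1) (hmeas : ∀ m, Measurable (ξ m))
    (hlaw : ∀ m : ℤ, ∀ j : ℕ, 1 ≤ j →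
      P {ω | ξ m ω = j} = ENNReal.ofReal (p * (1 - p) ^ (j - 1))) (i : ℤ) (t : ℕ) :
    P (Eev ξ i t) = ENNReal.ofReal (1 - (1-p)^t) := by
  have hq0 : (0:ℝ) ≤ 1 - p := by linarith
  have hE : Eev ξ i t = ⋃ j ∈ Finset.range (t+1), ξ i ⁻¹' {j} := by
    ext ω; simp [Eev, Nat.lt_succ_iff]
  have hdisj : (↑(Finset.range (t+1)) : Set ℕ).PairwiseDisjoint (fun j : ℕ => ξ i ⁻¹' {j}) := by
    intro a _ b _ hab
    simp only [Function.onFun, Set.disjoint_left, Set.mem_preimage, Set.mem_singleton_iff]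
    intro ω ha hb
    exact hab (ha ▸ hb ▸ rfl)
  rw [hE, measure_biUnion_finset hdisj (fun j _ => (hmeas i) (measurableSet_singleton j))]
  rw [Finset.sum_range_succ']
  have h0 : P (ξ i ⁻¹' {0}) = 0 := by
    have h5 : {ω | ξ i ω = 0} = ξ i ⁻¹' {0} := rfl
    rw [← h5]; exact meas_zero hp0 hp1 hmeas hlaw i
  have he : ∀ j : ℕ, P (ξ i ⁻¹' {j + 1}) = ENNReal.ofReal (p * (1-p)^j) := by
    intro j
    have := hlaw i (j+1) (by omega)
    simp only [Nat.add_sub_cancel] at this; exact this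
  rw [h0, add_zero]
  rw [Finset.sum_congr rfl (fun j _ => he j)]
  rw [← ENNReal.ofReal_sum_of_nonneg (fun j _ => by positivity)]
  congr 1
  have hgm := geom_sum_mul (1-p) t
  rw [← Finset.mul_sum] at *
  nlinarith [hgm]

lemma meas_biInter_Eev
    (hmeas : ∀ m, Measurable (ξ m))
    (hindep : iIndepFun ξ P)
    (hp0 : 0 < p) (hp1 : p ≤ 1)
    (hlaw : ∀ m : ℤ, ∀ j : ℕ, 1 ≤ j →
      P {ω | ξ m ω = j} = ENNReal.ofReal (p * (1 - p) ^ (j - 1)))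
    (B : Finset ℤ) (t : ℤ → ℕ) :
    P (⋂ i ∈ B, Eev ξ i (t i)) = ∏ i ∈ B, ENNReal.ofReal (1 - (1-p)^(t i)) := by
  rw [hindep.meas_biInter (S := B) (s := fun i => Eev ξ i (t i))
    (fun i _ => ⟨Set.Iic (t i), measurableSet_Iic, rfl⟩)]
  exact Finset.prod_congr rfl (fun i _ => meas_Eev hp0 hp1 hmeas hlaw i (t i))

lemma meas_Tail (hp0 : 0 < p) (hp1 : p ≤ 1) (hmeas : ∀ m, Measurable (ξ m))
    (hindep : iIndepFun ξ P)
    (hlaw : ∀ m : ℤ, ∀ j : ℕ, 1 ≤ j →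
      P {ω | ξ m ω = j} = ENNReal.ofReal (p * (1 - p) ^ (j - 1)))
    (N k : ℕ) (hk : k ≤ N) :
    P (Tail ξ N k) = ENNReal.ofReal (uprod p (N - k)) := by
  rw [Tail, meas_biInter_Eev hmeas hindep hp0 hp1 hlaw]
  rw [← ENNReal.ofReal_prod_of_nonneg (fun i _ => by
    have := qpow_lt_one hp0 hp1 (((i + (N:ℤ) - 1).toNat) - 1)
    have h2 : (0:ℝ) ≤ (1-p)^((i + (N:ℤ) - 1).toNat) := pow_nonneg (by linarith) _
    have h3 : (1-p)^((i + (N:ℤ) - 1).toNat) ≤ 1 := pow_le_one₀ (by linarith) (by linarith)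
    linarith)]
  congr 1
  unfold uprod
  apply Finset.prod_bij' (fun i _ => (i + (N:ℤ) - 2).toNat) (fun j _ => (j:ℤ) + 2 - N)
  · intro i hi
    simp only [Finset.mem_Icc] at hi
    simp only [Finset.mem_range]
    omega
  · intro j hj
    simp only [Finset.mem_range] at hj
    simp only [Finset.mem_Icc]
    omega
  · intro i hi
    simp only [Finset.mem_Icc] at hi
    omega
  · intro j hj
    simp only [Finset.mem_range] at hj
    omega
  · intro i hi
    simp only [Finset.mem_Icc] at hi
    have : (i + (N:ℤ) - 1).toNat = (i + (N:ℤ) - 2).toNat + 1 := by omega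
    rw [this]

lemma Zev_eq_Tail (N : ℕ) : Zev ξ N = Tail ξ N 0 := by
  ext ω
  simp only [Zev, Tail, Eev, Set.mem_setOf_eq, Set.mem_iInter, Mcount_eq_Mfun, Mfun_eq_zero_iff,
    Finset.mem_Icc, Nat.cast_zero, sub_zero]
  constructor <;> (intro h i hi; have := h i hi; omega)

lemma meas_Zev (hp0 : 0 < p) (hp1 : p ≤ 1) (hmeas : ∀ m, Measurable (ξ m))
    (hindep : iIndepFun ξ P)
    (hlaw : ∀ m : ℤ, ∀ j : ℕ, 1 ≤ j →
      P {ω | ξ m ω = j} = ENNReal.ofReal (p * (1 - p) ^ (j - 1)))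
    (N : ℕ) :
    P (Zev ξ N) = ENNReal.ofReal (uprod p N) := by
  rw [Zev_eq_Tail, meas_Tail hp0 hp1 hmeas hindep hlaw N 0 (Nat.zero_le N)]
  simp

lemma measurable_Mcount (hmeas : ∀ m, Measurable (ξ m)) (n : ℕ) :
    Measurable (fun ω => Mcount ξ n ω) := by
  have h : (fun ω => Mcount ξ n ω) = fun ω =>
      ∑ i ∈ Finset.Icc (2-(n:ℤ)) 1, if i + (n:ℤ) - 1 < (ξ i ω : ℤ) then 1 else 0 := by
    funext ω
    exact Finset.card_filter _ _
  rw [h]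
  apply Finset.measurable_sum
  intro i _
  apply Measurable.ite _ measurable_const measurable_const
  exact (hmeas i) (MeasurableSet.of_discrete (s := {x : ℕ | i + (n:ℤ) - 1 < (x:ℤ)}))

lemma measurableSet_Zev (hmeas : ∀ m, Measurable (ξ m)) (n : ℕ) :
    MeasurableSet (Zev ξ n) :=
  (measurable_Mcount hmeas n) (measurableSet_singleton 0)

lemma measurableSet_Aev (hmeas : ∀ m, Measurable (ξ m)) (n : ℕ) :
    MeasurableSet (Aev ξ n) := by
  have h : Aev ξ n = ⋂ j ∈ Finset.Icc 1 n, (Zev ξ j)ᶜ := by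
    ext ω; simp [Aev, Zev]
  rw [h]
  exact Set.Finite.measurableSet_biInter (Finset.finite_toSet _)
    (fun j _ => (measurableSet_Zev hmeas j).compl)

lemma measurableSet_Dev (hmeas : ∀ m, Measurable (ξ m)) (k : ℕ) :
    MeasurableSet (Dev ξ k) :=
  (measurableSet_Aev hmeas (k-1)).inter (measurableSet_Zev hmeas k)

lemma measurableSet_Tail (hmeas : ∀ m, Measurable (ξ m)) (N k : ℕ) :
    MeasurableSet (Tail ξ N k) :=
  Set.Finite.measurableSet_biInter (Finset.finite_toSet _)
    (fun i _ => (hmeas i) (MeasurableSet.of_discrete (s := Set.Iic ((i + (N:ℤ) - 1).toNat))))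

end MeasureFacts

section Indep

open Finset

variable {Ω : Type*} [MeasurableSpace Ω] {P : Measure Ω} [IsProbabilityMeasure P]
variable {p : ℝ} {ξ : ℤ → Ω → ℕ}

lemma meas_any {S : Finset ℤ} (X : Set (↥S → ℕ)) : MeasurableSet X :=
  X.to_countable.measurableSet

lemma Dev_eq_preimage (k : ℕ) :
    Dev ξ k = (fun ω (i : ↥(Finset.Icc (2-(k:ℤ)) 1)) => ξ i ω) ⁻¹'
      {x : ↥(Finset.Icc (2-(k:ℤ)) 1) → ℕ |
        (∀ j ∈ Finset.Icc 1 (k-1), Mfun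
          (fun i => if h : i ∈ Finset.Icc (2-(k:ℤ)) 1 then x ⟨i,h⟩ else 0) j ≠ 0)
        ∧ Mfun (fun i => if h : i ∈ Finset.Icc (2-(k:ℤ)) 1 then x ⟨i,h⟩ else 0) k = 0} := by
  ext ω
  simp only [Dev, Aev, Zev, Set.mem_inter_iff, Set.mem_setOf_eq, Set.mem_preimage,
    Mcount_eq_Mfun]
  have hcong : ∀ j : ℕ, j ≤ k →
      Mfun (fun i => if h : i ∈ Finset.Icc (2-(k:ℤ)) 1 then ξ i ω else 0) j
        = Mfun (fun i => ξ i ω) j := by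
    intro j hj
    apply Mfun_congr
    intro i hi
    simp only [Finset.mem_Icc] at hi
    rw [dif_pos]
    simp only [Finset.mem_Icc]
    omega
  constructor
  · rintro ⟨hA, hZ⟩
    refine ⟨fun j hj => ?_, ?_⟩
    · rw [hcong j (by simp only [Finset.mem_Icc] at hj; omega)]
      exact hA j hj
    · rw [hcong k le_rfl]; exact hZ
  · rintro ⟨hA, hZ⟩
    refine ⟨fun j hj => ?_, ?_⟩
    · have := hA j hj
      rwa [hcong j (by simp only [Finset.mem_Icc] at hj; omega)] at this
    · rwa [hcong k le_rfl] at hZ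

lemma Tail_eq_preimage (N k : ℕ) :
    Tail ξ N k = (fun ω (i : ↥(Finset.Icc (2-(N:ℤ)) (1-(k:ℤ)))) => ξ i ω) ⁻¹'
      {x : ↥(Finset.Icc (2-(N:ℤ)) (1-(k:ℤ))) → ℕ |
        ∀ i : ↥(Finset.Icc (2-(N:ℤ)) (1-(k:ℤ))), x i ≤ (((i:ℤ)) + N - 1).toNat} := by
  ext ω
  simp only [Tail, Eev, Set.mem_iInter, Set.mem_setOf_eq, Set.mem_preimage]
  exact ⟨fun h i => h i i.2, fun h i hi => h ⟨i, hi⟩⟩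

lemma meas_Dev_inter_Tail (hmeas : ∀ m, Measurable (ξ m))
    (hindep : iIndepFun ξ P)
    (N k : ℕ) :
    P (Dev ξ k ∩ Tail ξ N k) = P (Dev ξ k) * P (Tail ξ N k) := by
  have hST : Disjoint (Finset.Icc (2-(k:ℤ)) 1) (Finset.Icc (2-(N:ℤ)) (1-(k:ℤ))) := by
    rw [Finset.disjoint_left]
    intro i hiS hiT
    simp only [Finset.mem_Icc] at hiS hiT
    omega
  have hIF := hindep.indepFun_finset _ _ hST hmeas
  rw [Dev_eq_preimage k, Tail_eq_preimage N k]
  exact hIF.measure_inter_preimage_eq_mul _ _ (meas_any _) (meas_any _)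

lemma renewal_incl (N : ℕ) (hN : 1 ≤ N) :
    Zev ξ N ⊆ ⋃ k ∈ Finset.Icc 1 N, (Dev ξ k ∩ Tail ξ N k) := by
  intro ω hω
  have hmem : N ∈ {n : ℕ | 1 ≤ n ∧ Mcount ξ n ω = 0} := ⟨hN, hω⟩
  have hk := Nat.sInf_mem (Set.nonempty_of_mem hmem)
  set k := sInf {n : ℕ | 1 ≤ n ∧ Mcount ξ n ω = 0} with hkdef
  have hkN : k ≤ N := Nat.sInf_le hmem
  have hk1 : 1 ≤ k := hk.1
  refine Set.mem_biUnion (show k ∈ Finset.Icc 1 N by simp only [Finset.mem_Icc]; omega) ⟨⟨?_, hk.2⟩, ?_⟩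
  · intro j hj hzero
    simp only [Finset.mem_Icc] at hj
    have : k ≤ j := Nat.sInf_le ⟨hj.1, hzero⟩
    omega
  · have hZ := (Mfun_eq_zero_iff (η := fun i => ξ i ω) (n := N)).1 hω
    simp only [Tail, Set.mem_iInter]
    intro i hi
    simp only [Finset.mem_Icc] at hi
    have := hZ i (by simp only [Finset.mem_Icc]; omega)
    simp only [Eev, Set.mem_setOf_eq]
    omega

lemma renewal_ineq (hmeas : ∀ m, Measurable (ξ m))
    (hindep : iIndepFun ξ P)
    (N : ℕ) (hN : 1 ≤ N) :
    P (Zev ξ N) ≤ ∑ k ∈ Finset.Icc 1 N, P (Dev ξ k) * P (Tail ξ N k) := by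
  calc P (Zev ξ N) ≤ P (⋃ k ∈ Finset.Icc 1 N, (Dev ξ k ∩ Tail ξ N k)) :=
        measure_mono (renewal_incl N hN)
    _ ≤ ∑ k ∈ Finset.Icc 1 N, P (Dev ξ k ∩ Tail ξ N k) := measure_biUnion_finset_le _ _
    _ = ∑ k ∈ Finset.Icc 1 N, P (Dev ξ k) * P (Tail ξ N k) :=
        Finset.sum_congr rfl (fun k _ => meas_Dev_inter_Tail hmeas hindep N k)

lemma Aev_succ (m : ℕ) : Aev ξ (m+1) = Aev ξ m ∩ (Zev ξ (m+1))ᶜ := by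
  ext ω
  simp only [Aev, Zev, Set.mem_inter_iff, Set.mem_compl_iff, Set.mem_setOf_eq, Finset.mem_Icc]
  constructor
  · intro h
    exact ⟨fun j hj => h j ⟨hj.1, by omega⟩, h (m+1) ⟨by omega, le_rfl⟩⟩
  · rintro ⟨h1, h2⟩ j hj
    by_cases hje : j = m + 1
    · subst hje; exact h2
    · exact h1 j ⟨hj.1, by omega⟩

lemma meas_Aev_split (hmeas : ∀ m, Measurable (ξ m)) (m : ℕ) :
    P (Aev ξ m) = P (Aev ξ (m+1)) + P (Dev ξ (m+1)) := by
  have h1 := measure_inter_add_diff (μ := P) (Aev ξ m) (measurableSet_Zev hmeas (m+1))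
  have h2 : Aev ξ m ∩ Zev ξ (m+1) = Dev ξ (m+1) := by
    simp only [Dev, Nat.add_sub_cancel]
  have h3 : Aev ξ m \ Zev ξ (m+1) = Aev ξ (m+1) := by
    rw [Set.diff_eq, ← Aev_succ]
  rw [h2, h3] at h1
  rw [← h1, add_comm]

end Indep

section MainBound

open Finset

variable {Ω : Type*} [MeasurableSpace Ω] {P : Measure Ω} [IsProbabilityMeasure P]
variable {p : ℝ} {ξ : ℤ → Ω → ℕ}

lemma sum_Icc_one_eq (g : ℕ → ℝ) (N : ℕ) :
    ∑ k ∈ Finset.Icc 1 N, g k = ∑ j ∈ Finset.range N, g (j+1) := by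
  rw [← Finset.Ico_add_one_right_eq_Icc, Finset.sum_Ico_eq_sum_range]
  apply Finset.sum_congr
  · norm_num
  · intro j _
    rw [Nat.add_comm]

set_option maxHeartbeats 2000000 in
lemma exists_bound (hp0 : 0 < p) (hp1 : p ≤ 1) (hmeas : ∀ m, Measurable (ξ m))
    (hindep : iIndepFun ξ P)
    (hlaw : ∀ m : ℤ, ∀ j : ℕ, 1 ≤ j →
      P {ω | ξ m ω = j} = ENNReal.ofReal (p * (1 - p) ^ (j - 1))) :
    ∃ ρ C : ℝ, 1 < ρ ∧ 0 ≤ C ∧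
      ∀ n, ∑ N ∈ Finset.range n, (P (Aev ξ N)).toReal * ρ^N ≤ C := by
  have hq0 : (0:ℝ) ≤ 1 - p := by linarith
  have hq1 : 1 - p < 1 := by linarith
  set a : ℕ → ℝ := fun N => (P (Aev ξ N)).toReal with ha_def
  set fR : ℕ → ℝ := fun k => (P (Dev ξ k)).toReal with hf_def
  have ha_nonneg : ∀ N, 0 ≤ a N := fun N => ENNReal.toReal_nonneg
  have hf_nonneg : ∀ k, 0 ≤ fR k := fun k => ENNReal.toReal_nonneg
  have ha0 : a 0 = 1 := by
    have h : Aev ξ 0 = Set.univ := by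
      ext ω; simp [Aev]
    simp [ha_def, h]
  have hstep : ∀ m, a m = a (m+1) + fR (m+1) := by
    intro m
    have h := meas_Aev_split (P := P) hmeas m
    simp only [ha_def, hf_def]
    rw [h, ENNReal.toReal_add (measure_ne_top P _) (measure_ne_top P _)]
  have htel : ∀ N, ∑ j ∈ Finset.range N, fR (j+1) = 1 - a N := by
    intro N
    induction N with
    | zero => simp [ha0]
    | succ N ih =>
      rw [Finset.sum_range_succ, ih]
      have := hstep N
      linarith
  -- real renewal inequality
  have hren : ∀ N, 1 ≤ N → uprod p N ≤ ∑ j ∈ Finset.range N, fR (j+1) * uprod p (N - (j+1)) := by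
    intro N hN
    have h1 := renewal_ineq hmeas hindep N hN
    rw [meas_Zev hp0 hp1 hmeas hindep hlaw] at h1
    have h2 : ∀ k ∈ Finset.Icc 1 N, P (Dev ξ k) * P (Tail ξ N k)
        = ENNReal.ofReal (fR k * uprod p (N - k)) := by
      intro k hk
      simp only [Finset.mem_Icc] at hk
      rw [meas_Tail hp0 hp1 hmeas hindep hlaw N k hk.2]
      rw [← ENNReal.ofReal_toReal (measure_ne_top P (Dev ξ k))]
      rw [← ENNReal.ofReal_mul ENNReal.toReal_nonneg]
    rw [Finset.sum_congr rfl h2] at h1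
    rw [← ENNReal.ofReal_sum_of_nonneg (fun k _ =>
      mul_nonneg (hf_nonneg k) (uprod_pos hp0 hp1 _).le)] at h1
    have h3 := (ENNReal.ofReal_le_ofReal_iff (Finset.sum_nonneg (fun k _ =>
      mul_nonneg (hf_nonneg k) (uprod_pos hp0 hp1 _).le))).1 h1
    calc uprod p N ≤ ∑ k ∈ Finset.Icc 1 N, fR k * uprod p (N - k) := h3
      _ = ∑ j ∈ Finset.range N, fR (j+1) * uprod p (N - (j+1)) :=
          sum_Icc_one_eq (fun k => fR k * uprod p (N - k)) N
  -- the constant c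
  have hbdd : BddBelow (Set.range (uprod p)) := by
    refine ⟨0, ?_⟩
    rintro x ⟨N, rfl⟩
    exact (uprod_pos hp0 hp1 N).le
  set c : ℝ := ⨅ N, uprod p N with hcdef
  have hc_le : ∀ N, c ≤ uprod p N := fun N => ciInf_le hbdd N
  have hc_pos : 0 < c := by
    obtain ⟨J, hJ⟩ := exists_pow_lt_of_lt_one (by linarith : (0:ℝ) < p/2) hq1
    have hJ2 : (1-p)^(J+1) ≤ p/2 := by
      calc (1-p)^(J+1) = (1-p)^J * (1-p) := by ring
        _ ≤ (1-p)^J * 1 := mul_le_mul_of_nonneg_left (by linarith) (pow_nonneg hq0 J)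
        _ ≤ p/2 := by rw [mul_one]; exact hJ.le
    have hJ3 : (1-p)^(J+1)/p ≤ 1/2 := by
      rw [div_le_div_iff₀ hp0 (by norm_num : (0:ℝ) < 2)]
      linarith
    have hlb : ∀ M, uprod p J / 2 ≤ uprod p M := by
      intro M
      rcases le_or_gt J M with h | h
      · have h1 := uprod_lower hp0 hp1 h
        have hpos := uprod_pos hp0 hp1 J
        nlinarith
      · have h1 := uprod_anti hp0 hp1 h.le
        have hpos := uprod_pos hp0 hp1 J
        linarith
    have h2 : uprod p J / 2 ≤ c := le_ciInf hlb
    have h3 := uprod_pos hp0 hp1 J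
    linarith
  have hc1 : c ≤ 1 := le_trans (hc_le 0) (by simp [uprod])
  have hw : ∀ N, uprod p N - c ≤ (1-p)^(N+1)/p := by
    intro N
    have hlb : ∀ M, uprod p N - (1-p)^(N+1)/p ≤ uprod p M := by
      intro M
      rcases le_or_gt N M with h | h
      · have h2 := uprod_lower hp0 hp1 h
        have h3 := uprod_le_one hp0 hp1 N
        have h4 : 0 ≤ (1-p)^(N+1)/p := by positivity
        have h5 := uprod_pos hp0 hp1 N
        nlinarith
      · have h2 := uprod_anti hp0 hp1 h.le
        have h4 : 0 ≤ (1-p)^(N+1)/p := by positivity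
        linarith
    have h6 : uprod p N - (1-p)^(N+1)/p ≤ c := le_ciInf hlb
    linarith
  -- main per-N bound
  have hmain : ∀ M, 1 ≤ M →
      c * a M ≤ (1/p) * ∑ j ∈ Finset.range M, fR (j+1) * (1-p)^(M - j) := by
    intro M hM
    have h1 := hren M hM
    have h2 : ∀ j ∈ Finset.range M,
        fR (j+1) * uprod p (M - (j+1)) ≤ fR (j+1) * c + fR (j+1) * ((1-p)^(M-j)/p) := by
      intro j hj
      simp only [Finset.mem_range] at hj
      have he : (M - (j+1)) + 1 = M - j := by omega
      have h3 := hw (M - (j+1))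
      rw [he] at h3
      nlinarith [hf_nonneg (j+1)]
    have h3 := Finset.sum_le_sum h2
    rw [Finset.sum_add_distrib] at h3
    have h4 : ∑ j ∈ Finset.range M, fR (j+1) * c = (1 - a M) * c := by
      rw [← Finset.sum_mul, htel]
    have h5 : ∑ j ∈ Finset.range M, fR (j+1) * ((1-p)^(M-j)/p)
        = (1/p) * ∑ j ∈ Finset.range M, fR (j+1) * (1-p)^(M-j) := by
      rw [Finset.mul_sum]
      exact Finset.sum_congr rfl (fun j _ => by ring)
    rw [h4, h5] at h3
    have h6 := hc_le M
    nlinarith [le_trans h1 h3]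
  -- choice of ρ
  set ε : ℝ := c * p^2 / (4 * (2 - p)) with hεdef
  have h2p : (0:ℝ) < 2 - p := by linarith
  have hε_pos : 0 < ε := by
    rw [hεdef]
    exact div_pos (mul_pos hc_pos (pow_pos hp0 2)) (by linarith)
  have hε_le : ε ≤ p/4 := by
    rw [hεdef, div_le_div_iff₀ (by linarith : (0:ℝ) < 4*(2-p)) (by norm_num : (0:ℝ) < 4)]
    nlinarith
  set ρ : ℝ := 1 + ε with hρdef
  have hρ1 : 1 < ρ := by rw [hρdef]; linarith
  have hρ0 : 0 < ρ := by linarith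
  set D : ℝ := 1 - (1-p) * ρ with hDdef
  have hD_ge : 3*p/4 ≤ D := by
    rw [hDdef, hρdef]
    nlinarith
  have hD_pos : 0 < D := by linarith
  set K : ℝ := (1-p) / (c * p * D) with hKdef
  have hK_nonneg : 0 ≤ K := by
    rw [hKdef]
    exact div_nonneg hq0 (mul_pos (mul_pos hc_pos hp0) hD_pos).le
  clear_value a fR c ε ρ D K
  have hKε : K * ε ≤ 1/2 := by
    rw [hKdef, hεdef, div_mul_div_comm,
      div_le_div_iff₀ (mul_pos (mul_pos (mul_pos hc_pos hp0) hD_pos) (by linarith : (0:ℝ) < 4*(2-p))) (by norm_num : (0:ℝ) < 2)]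
    have h1 : (c*p) * (3*p/4) ≤ (c*p) * D :=
      mul_le_mul_of_nonneg_left hD_ge (mul_pos hc_pos hp0).le
    have h2 := mul_le_mul_of_nonneg_right h1 (by linarith : (0:ℝ) ≤ 4*(2-p))
    nlinarith [h2, mul_nonneg (mul_nonneg (mul_nonneg hc_pos.le hp0.le) hp0.le)
      (by linarith : (0:ℝ) ≤ 4 - p)]
  -- partial sums S n
  set S : ℕ → ℝ := fun n => ∑ N ∈ Finset.range n, a N * ρ^N with hSdef
  clear_value S
  have hS_mono : ∀ n, S n ≤ S (n+1) := by
    intro n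
    simp only [hSdef, Finset.sum_range_succ]
    have : 0 ≤ a n * ρ^n := mul_nonneg (ha_nonneg n) (pow_pos hρ0 n).le
    linarith
  have hS_nonneg : ∀ n, 0 ≤ S n := by
    intro n
    simp only [hSdef]
    apply Finset.sum_nonneg
    intro N _
    exact mul_nonneg (ha_nonneg N) (pow_pos hρ0 N).le
  -- geometric sum bound
  have hgeom : ∀ s : ℕ, ∑ m ∈ Finset.range s, ((1-p)*ρ)^m ≤ 1/D := by
    intro s
    have hgm := geom_sum_mul ((1-p)*ρ) s
    have hqρ0 : (0:ℝ) ≤ (1-p)*ρ := mul_nonneg hq0 hρ0.le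
    have hpow : (0:ℝ) ≤ ((1-p)*ρ)^s := pow_nonneg hqρ0 s
    rw [le_div_iff₀ hD_pos]
    nlinarith
  -- G bound
  have hG : ∀ n, ∑ j ∈ Finset.range n, fR (j+1) * ρ^(j+1) ≤ 1 + (ρ-1) * S n := by
    intro n
    have hfa : ∀ j : ℕ, fR (j+1) = a j - a (j+1) := fun j => by have := hstep j; linarith
    have e1 : ∑ j ∈ Finset.range n, fR (j+1) * ρ^(j+1)
        = (∑ j ∈ Finset.range n, a j * ρ^(j+1)) - ∑ j ∈ Finset.range n, a (j+1) * ρ^(j+1) := by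
      rw [← Finset.sum_sub_distrib]
      exact Finset.sum_congr rfl (fun j _ => by rw [hfa j]; ring)
    have e2 : ∑ j ∈ Finset.range n, a j * ρ^(j+1) = ρ * S n := by
      simp only [hSdef, Finset.mul_sum]
      exact Finset.sum_congr rfl (fun j _ => by ring)
    have e3 : S (n+1) = (∑ j ∈ Finset.range n, a (j+1) * ρ^(j+1)) + 1 := by
      simp only [hSdef]
      rw [Finset.sum_range_succ']
      simp [ha0]
    have e4 := hS_mono n
    rw [e1, e2]
    have : ∑ j ∈ Finset.range n, a (j+1) * ρ^(j+1) = S (n+1) - 1 := by linarith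
    rw [this]
    nlinarith [hS_nonneg n]
  clear hren hbdd hc_le hw htel hc1 hε_le hstep
  -- the recursion
  have hrec : ∀ n, S (n+1) ≤ 2 + 2*K := by
    intro n
    -- W : the double sum
    set W : ℝ := ∑ N ∈ Finset.range n,
      ρ^(N+1) * ∑ j ∈ Finset.range (N+1), fR (j+1) * (1-p)^(N+1-j) with hWdef
    have hsplit : S (n+1) = 1 + ∑ N ∈ Finset.range n, a (N+1) * ρ^(N+1) := by
      simp only [hSdef]
      rw [Finset.sum_range_succ']
      simp [ha0]
      ring
    have hterm : ∀ N ∈ Finset.range n, a (N+1) * ρ^(N+1)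
        ≤ (1/(c*p)) * (ρ^(N+1) * ∑ j ∈ Finset.range (N+1), fR (j+1) * (1-p)^(N+1-j)) := by
      intro N _
      have h1 := hmain (N+1) (by omega)
      have hρpow : (0:ℝ) < ρ^(N+1) := pow_pos hρ0 (N+1)
      have hsnn : (0:ℝ) ≤ ∑ j ∈ Finset.range (N+1), fR (j+1) * (1-p)^(N+1-j) :=
        Finset.sum_nonneg (fun j _ => mul_nonneg (hf_nonneg _) (pow_nonneg hq0 _))
      rw [one_div, inv_mul_eq_div, le_div_iff₀ (mul_pos hc_pos hp0)]
      have h2 : p * (c * a (N+1)) ≤ p * ((1/p) * ∑ j ∈ Finset.range (N+1), fR (j+1) * (1-p)^(N+1-j)) :=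
        mul_le_mul_of_nonneg_left h1 hp0.le
      have h3 : p * ((1/p) * ∑ j ∈ Finset.range (N+1), fR (j+1) * (1-p)^(N+1-j))
          = ∑ j ∈ Finset.range (N+1), fR (j+1) * (1-p)^(N+1-j) := by
        field_simp
      rw [h3] at h2
      nlinarith [mul_le_mul_of_nonneg_right h2 hρpow.le]
    have hsum1 : ∑ N ∈ Finset.range n, a (N+1) * ρ^(N+1) ≤ (1/(c*p)) * W := by
      rw [hWdef, Finset.mul_sum]
      exact Finset.sum_le_sum hterm
    -- rearrange W
    have hWeq : W = ∑ j ∈ Finset.range n, ∑ N ∈ Finset.range n,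
        (if j ≤ N then ρ^(N+1) * (fR (j+1) * (1-p)^(N+1-j)) else 0) := by
      rw [← Finset.sum_comm]
      apply Finset.sum_congr rfl
      intro N hN
      simp only [Finset.mem_range] at hN
      rw [Finset.mul_sum]
      have hset : (Finset.range n).filter (fun j => j ≤ N) = Finset.range (N+1) := by
        ext x
        simp only [Finset.mem_filter, Finset.mem_range, Nat.lt_succ_iff]
        omega
      rw [← Finset.sum_filter, hset]
    have hWle : W ≤ ((1-p)/D) * ∑ j ∈ Finset.range n, fR (j+1) * ρ^(j+1) := by
      rw [hWeq, Finset.mul_sum]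
      apply Finset.sum_le_sum
      intro j hj
      simp only [Finset.mem_range] at hj
      have e5 : ∑ N ∈ Finset.range n, (if j ≤ N then ρ^(N+1) * (fR (j+1) * (1-p)^(N+1-j)) else 0)
          = fR (j+1) * ∑ N ∈ Finset.range n, (if j ≤ N then ρ^(N+1) * (1-p)^(N+1-j) else 0) := by
        rw [Finset.mul_sum]
        apply Finset.sum_congr rfl
        intro N _
        split_ifs <;> ring
      rw [e5]
      have hset2 : (Finset.range n).filter (fun N => j ≤ N) = Finset.Ico j n := by
        ext x
        simp only [Finset.mem_filter, Finset.mem_range, Finset.mem_Ico]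
        omega
      have e6 : ∑ N ∈ Finset.range n, (if j ≤ N then ρ^(N+1) * (1-p)^(N+1-j) else 0)
          = ∑ m ∈ Finset.range (n-j), ρ^((j+m)+1) * (1-p)^((j+m)+1-j) := by
        rw [← Finset.sum_filter, hset2, Finset.sum_Ico_eq_sum_range]
      have e7 : ∀ m : ℕ, ρ^((j+m)+1) * (1-p)^((j+m)+1-j) = (ρ^(j+1) * (1-p)) * ((1-p)*ρ)^m := by
        intro m
        have h1 : (j+m)+1-j = m+1 := by omega
        rw [h1, show (j+m)+1 = (j+1)+m by omega, pow_add, mul_pow, pow_succ]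
        ring
      have e8 : ∑ m ∈ Finset.range (n-j), ρ^((j+m)+1) * (1-p)^((j+m)+1-j)
          = (ρ^(j+1) * (1-p)) * ∑ m ∈ Finset.range (n-j), ((1-p)*ρ)^m := by
        rw [Finset.mul_sum]
        exact Finset.sum_congr rfl (fun m _ => e7 m)
      rw [e6, e8]
      have h9 := hgeom (n - j)
      have h10 : (0:ℝ) ≤ ρ^(j+1) * (1-p) := mul_nonneg (pow_pos hρ0 (j+1)).le hq0
      calc fR (j+1) * ((ρ^(j+1) * (1-p)) * ∑ m ∈ Finset.range (n-j), ((1-p)*ρ)^m)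
          ≤ fR (j+1) * ((ρ^(j+1) * (1-p)) * (1/D)) := by
            apply mul_le_mul_of_nonneg_left _ (hf_nonneg _)
            exact mul_le_mul_of_nonneg_left h9 h10
        _ = (1-p)/D * (fR (j+1) * ρ^(j+1)) := by ring
    -- combine
    have h11 := hG n
    have h12 : S (n+1) ≤ 1 + (1/(c*p)) * (((1-p)/D) * (1 + (ρ-1) * S n)) := by
      have hGn_nonneg : (0:ℝ) ≤ ∑ j ∈ Finset.range n, fR (j+1) * ρ^(j+1) :=
        Finset.sum_nonneg (fun j _ => mul_nonneg (hf_nonneg _) (pow_pos hρ0 _).le)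
      have hfac : (0:ℝ) ≤ (1/(c*p)) := by
        rw [one_div]
        exact (inv_pos.2 (mul_pos hc_pos hp0)).le
      have hfac2 : (0:ℝ) ≤ (1-p)/D := div_nonneg hq0 hD_pos.le
      have := mul_le_mul_of_nonneg_left (le_trans hWle
        (mul_le_mul_of_nonneg_left h11 hfac2)) hfac
      linarith [hsplit, le_trans hsum1 this]
    have hKeq : (1/(c*p)) * ((1-p)/D) = K := by
      rw [hKdef, div_mul_div_comm, one_mul]
    have h13 : S (n+1) ≤ 1 + K * (1 + (ρ-1) * S n) := by
      calc S (n+1) ≤ 1 + (1/(c*p)) * (((1-p)/D) * (1 + (ρ-1) * S n)) := h12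
        _ = 1 + ((1/(c*p)) * ((1-p)/D)) * (1 + (ρ-1) * S n) := by ring
        _ = 1 + K * (1 + (ρ-1) * S n) := by rw [hKeq]
    have h14 : (ρ - 1) = ε := by rw [hρdef]; ring
    have h15 : S n ≤ S (n+1) := hS_mono n
    have h16 : 0 ≤ S (n+1) := hS_nonneg (n+1)
    rw [h14] at h13
    have hint1 : K*ε*S n ≤ K*ε*S (n+1) :=
      mul_le_mul_of_nonneg_left h15 (mul_nonneg hK_nonneg hε_pos.le)
    have hint2 : K*ε*S (n+1) ≤ 1/2*S (n+1) := mul_le_mul_of_nonneg_right hKε h16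
    nlinarith [hint1, hint2]
  refine ⟨ρ, 2 + 2*K, hρ1, by linarith, ?_⟩
  intro n
  have hfin : S n ≤ 2 + 2*K := by
    cases n with
    | zero =>
      have : S 0 = 0 := by simp [hSdef]
      rw [this]; linarith
    | succ n => exact hrec n
  have hgoal : ∑ N ∈ Finset.range n, (P (Aev ξ N)).toReal * ρ^N = S n := by
    simp only [hSdef, ha_def]
  rw [hgoal]
  exact hfin

end MainBound


end TpastAux

open TpastAux in
set_option maxHeartbeats 1000000 in
/-- for every `p ∈ (0,1]`, the time `T_past` has finite exponential
moments: there is `ρ > 1` with `E[ρ^{T_past}] < ∞`. -/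
theorem Tpast_finite_exponential_moments (p : ℝ) (hp0 : 0 < p) (hp1 : p ≤ 1)
    {Ω : Type*} [MeasurableSpace Ω] (P : Measure Ω) [IsProbabilityMeasure P]
    (ξ : ℤ → Ω → ℕ) (hmeas : ∀ m, Measurable (ξ m))
    (hlaw : ∀ m : ℤ, ∀ j : ℕ, 1 ≤ j →
      P {ω | ξ m ω = j} = ENNReal.ofReal (p * (1 - p) ^ (j - 1)))
    (hindep : iIndepFun ξ P) :
    ∃ ρ : ℝ, 1 < ρ ∧ (∫⁻ ω, ENNReal.ofReal (ρ ^ (Tpast ξ ω)) ∂P) < ⊤ := by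
  obtain ⟨ρ, C, hρ1, hC0, hbound⟩ := TpastAux.exists_bound hp0 hp1 hmeas hindep hlaw
  refine ⟨ρ, hρ1, ?_⟩
  have hρ0 : (0:ℝ) < ρ := by linarith
  have hpoint : ∀ ω, ENNReal.ofReal (ρ ^ (Tpast ξ ω)) ≤
      1 + ∑' N : ℕ, (Aev ξ N).indicator (fun _ => ENNReal.ofReal ((ρ-1) * ρ^N)) ω := by
    intro ω
    have hA : ∀ N, N < Tpast ξ ω → ω ∈ Aev ξ N := by
      intro N hN
      simp only [Aev, Set.mem_setOf_eq]
      intro j hj hzero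
      simp only [Finset.mem_Icc] at hj
      have hT : Tpast ξ ω = sInf {n : ℕ | 1 ≤ n ∧ Mcount ξ n ω = 0} := rfl
      have h1 : Tpast ξ ω ≤ j := by
        rw [hT]
        exact Nat.sInf_le ⟨hj.1, hzero⟩
      omega
    have hsg : (0:ℝ) ≤ (ρ-1) * ∑ N ∈ Finset.range (Tpast ξ ω), ρ^N :=
      mul_nonneg (by linarith) (Finset.sum_nonneg (fun N _ => (pow_pos hρ0 N).le))
    have hgeo : (ρ:ℝ)^(Tpast ξ ω) = 1 + (ρ-1) * ∑ N ∈ Finset.range (Tpast ξ ω), ρ^N := by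
      have h := geom_sum_mul ρ (Tpast ξ ω)
      linear_combination -h
    rw [hgeo, ENNReal.ofReal_add (by norm_num) hsg, ENNReal.ofReal_one]
    apply add_le_add_right
    rw [Finset.mul_sum, ENNReal.ofReal_sum_of_nonneg
      (fun N _ => mul_nonneg (by linarith) (pow_pos hρ0 N).le)]
    have h3 : ∀ N ∈ Finset.range (Tpast ξ ω), ENNReal.ofReal ((ρ-1)*ρ^N)
        = (Aev ξ N).indicator (fun _ => ENNReal.ofReal ((ρ-1)*ρ^N)) ω := fun N hN =>
      (Set.indicator_of_mem (hA N (Finset.mem_range.1 hN))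
        (fun _ => ENNReal.ofReal ((ρ-1)*ρ^N))).symm
    rw [Finset.sum_congr rfl h3]
    exact ENNReal.sum_le_tsum (Finset.range (Tpast ξ ω))
  have hstep2 : (∫⁻ ω, ENNReal.ofReal (ρ ^ (Tpast ξ ω)) ∂P)
      ≤ 1 + ∑' N : ℕ, ENNReal.ofReal ((ρ-1) * ρ^N) * P (Aev ξ N) := by
    calc (∫⁻ ω, ENNReal.ofReal (ρ ^ (Tpast ξ ω)) ∂P)
        ≤ ∫⁻ ω, (1 + ∑' N : ℕ, (Aev ξ N).indicator (fun _ => ENNReal.ofReal ((ρ-1) * ρ^N)) ω) ∂P :=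
          lintegral_mono hpoint
      _ = (∫⁻ _, (1:ENNReal) ∂P) +
          ∫⁻ ω, (∑' N : ℕ, (Aev ξ N).indicator (fun _ => ENNReal.ofReal ((ρ-1) * ρ^N)) ω) ∂P := by
          rw [lintegral_add_left measurable_const]
      _ = 1 + ∑' N : ℕ, ENNReal.ofReal ((ρ-1) * ρ^N) * P (Aev ξ N) := by
          rw [lintegral_const, measure_univ, mul_one]
          congr 1
          rw [lintegral_tsum (fun N =>
            ((measurable_const.indicator (measurableSet_Aev hmeas N))).aemeasurable)]
          exact tsum_congr (fun N => lintegral_indicator_const (measurableSet_Aev hmeas N) _)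
  have hterm : ∀ N : ℕ, ENNReal.ofReal ((ρ-1)*ρ^N) * P (Aev ξ N)
      = ENNReal.ofReal (ρ-1) * ENNReal.ofReal ((P (Aev ξ N)).toReal * ρ^N) := by
    intro N
    rw [ENNReal.ofReal_mul (show (0:ℝ) ≤ ρ-1 by linarith),
      ENNReal.ofReal_mul (ENNReal.toReal_nonneg),
      ENNReal.ofReal_toReal (measure_ne_top P (Aev ξ N))]
    ring
  have hsum : ∑' N : ℕ, ENNReal.ofReal ((P (Aev ξ N)).toReal * ρ^N) ≤ ENNReal.ofReal C := by
    rw [ENNReal.tsum_eq_iSup_nat]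
    apply iSup_le
    intro n
    rw [← ENNReal.ofReal_sum_of_nonneg
      (fun N _ => mul_nonneg ENNReal.toReal_nonneg (pow_pos hρ0 N).le)]
    exact ENNReal.ofReal_le_ofReal (hbound n)
  have hfin : ∑' N : ℕ, ENNReal.ofReal ((ρ-1) * ρ^N) * P (Aev ξ N) < ⊤ := by
    rw [tsum_congr hterm, ENNReal.tsum_mul_left]
    calc ENNReal.ofReal (ρ-1) * ∑' N : ℕ, ENNReal.ofReal ((P (Aev ξ N)).toReal * ρ^N)
        ≤ ENNReal.ofReal (ρ-1) * ENNReal.ofReal C := by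
          exact mul_le_mul_right hsum _
      _ < ⊤ := ENNReal.mul_lt_top ENNReal.ofReal_lt_top ENNReal.ofReal_lt_top
  calc (∫⁻ ω, ENNReal.ofReal (ρ ^ (Tpast ξ ω)) ∂P)
      ≤ 1 + ∑' N : ℕ, ENNReal.ofReal ((ρ-1) * ρ^N) * P (Aev ξ N) := hstep2
    _ < ⊤ := ENNReal.add_lt_top.2 ⟨ENNReal.one_lt_top, hfin⟩
end

section
/- For the two-atom distribution ν = (1−p)δ_{1/2} + p δ_1 with p ∈ [0,1], the last passage percolation time constant equals C(ν) = 1 − (1−p)/2 = (1+p)/2; equivalently, writing q = 1−p, C((1−q)δ_1 + q δ_{1/2}) = (2−q)/2. -/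
open MeasureTheory ProbabilityTheory Filter

noncomputable section

/-- Weight of a directed path, given real edge weights `X`. -/
def pathWeightR (X : ℕ → ℕ → ℝ) : List ℕ → ℝ
  | [] => 0
  | [_] => 0
  | a :: b :: rest => X a b + pathWeightR X (b :: rest)

/-- `π` is a directed (strictly increasing) path from `a` to `b`. -/
def IsPathFromTo (a b : ℕ) (π : List ℕ) : Prop :=
  π.Chain' (· < ·) ∧ π.head? = some a ∧ π.getLast? = some b

/-- Last passage time between vertices `a` and `b`. -/
def lppR (X : ℕ → ℕ → ℝ) (a b : ℕ) : ℝ :=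
  sSup {w | ∃ π : List ℕ, IsPathFromTo a b π ∧ w = pathWeightR X π}

/-- i.i.d. hypothesis for real edge weights indexed by pairs `i < j`. -/
def IIDEdgeWeightsR {Ω : Type*} [MeasurableSpace Ω] (P : Measure Ω)
    (X : ℕ → ℕ → Ω → ℝ) (ν : Measure ℝ) : Prop :=
  (∀ i j, Measurable (X i j)) ∧
  (∀ i j, i < j → Measure.map (X i j) P = ν) ∧
  iIndepFun
    (fun q : {q : ℕ × ℕ // q.1 < q.2} => X q.1.1 q.1.2) P

end

section Aux

variable {X : ℕ → ℕ → ℝ}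

/-- Sum of nearest-neighbor weights from `a` to `b`. -/
noncomputable def nnSum (X : ℕ → ℕ → ℝ) (a b : ℕ) : ℝ :=
  ∑ i ∈ Finset.Ico a b, X i (i + 1)

lemma chain_head_le_last : ∀ (l : List ℕ) (a b : ℕ), l.Chain' (· < ·) →
    l.head? = some a → l.getLast? = some b → a ≤ b := by
  intro l
  induction l with
  | nil => simp
  | cons x t ih =>
    intro a b hc hh hl
    cases t with
    | nil =>
      simp only [List.head?_cons, Option.some.injEq] at hh
      simp only [List.getLast?_singleton, Option.some.injEq] at hl
      omega
    | cons y s =>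
      simp only [List.head?_cons, Option.some.injEq] at hh
      rw [List.getLast?_cons_cons] at hl
      rcases List.isChain_cons_cons.mp hc with ⟨hxy, hc'⟩
      have := ih y b hc' rfl hl
      omega

lemma nnSum_half_le (hb : ∀ i j, i < j → X i j = 1/2 ∨ X i j = 1) (a b : ℕ) (hab : a ≤ b) :
    (b - a : ℕ) * (1/2 : ℝ) ≤ nnSum X a b := by
  have : (b - a : ℕ) * (1/2 : ℝ) = ∑ _i ∈ Finset.Ico a b, (1/2 : ℝ) := by
    rw [Finset.sum_const, Nat.card_Ico, nsmul_eq_mul]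
  rw [this]
  apply Finset.sum_le_sum
  intro i _
  rcases hb i (i+1) (by omega) with h | h <;> rw [h] <;> norm_num

lemma edge_le_nnSum (hb : ∀ i j, i < j → X i j = 1/2 ∨ X i j = 1) {a b : ℕ} (hab : a < b) :
    X a b ≤ nnSum X a b := by
  rcases Nat.lt_or_ge (a + 1) b with h | h
  · have h2 : (2 : ℕ) ≤ b - a := by omega
    have := nnSum_half_le hb a b hab.le
    have hx : X a b ≤ 1 := by rcases hb a b hab with h' | h' <;> rw [h'] <;> norm_num
    have : (1 : ℝ) ≤ nnSum X a b := by
      refine le_trans ?_ this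
      have : (2 : ℝ) ≤ (b - a : ℕ) := by exact_mod_cast h2
      linarith
    linarith
  · have hb1 : b = a + 1 := by omega
    subst hb1
    unfold nnSum
    rw [Finset.sum_Ico_eq_sum_range]
    simp

lemma weight_le_nnSum (hb : ∀ i j, i < j → X i j = 1/2 ∨ X i j = 1) :
    ∀ (l : List ℕ) (a b : ℕ), l.Chain' (· < ·) →
    l.head? = some a → l.getLast? = some b → pathWeightR X l ≤ nnSum X a b := by
  intro l
  induction l with
  | nil => simp
  | cons x t ih =>
    intro a b hc hh hl
    cases t with
    | nil =>
      simp only [List.head?_cons, Option.some.injEq] at hh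
      simp only [List.getLast?_singleton, Option.some.injEq] at hl
      subst hh; subst hl
      simp [pathWeightR, nnSum]
    | cons y s =>
      simp only [List.head?_cons, Option.some.injEq] at hh
      subst hh
      rw [List.getLast?_cons_cons] at hl
      rcases List.isChain_cons_cons.mp hc with ⟨hxy, hc'⟩
      have hyb : y ≤ b := chain_head_le_last (y :: s) y b hc' rfl hl
      have h1 : pathWeightR X (y :: s) ≤ nnSum X y b := ih y b hc' rfl hl
      have h2 : X x y ≤ nnSum X x y := edge_le_nnSum hb hxy
      have hsplit : nnSum X x y + nnSum X y b = nnSum X x b := by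
        unfold nnSum
        exact Finset.sum_Ico_consecutive _ hxy.le hyb
      show X x y + pathWeightR X (y :: s) ≤ nnSum X x b
      linarith

/-- The full path `[a, a+1, ..., a+k]`. -/
def fullPath (a : ℕ) : ℕ → List ℕ
  | 0 => [a]
  | k + 1 => a :: fullPath (a + 1) k

lemma fullPath_head? (a k : ℕ) : (fullPath a k).head? = some a := by
  cases k <;> rfl

lemma fullPath_chain : ∀ (k a : ℕ), (fullPath a k).Chain' (· < ·) := by
  intro k
  induction k with
  | zero => intro a; exact List.isChain_singleton a
  | succ m ih =>
    intro a
    have h := ih (a + 1)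
    show List.Chain' (· < ·) (a :: fullPath (a + 1) m)
    apply List.isChain_cons.mpr
    refine ⟨?_, h⟩
    intro y hy
    simp only [fullPath_head?, Option.mem_def, Option.some.injEq] at hy
    omega

lemma fullPath_getLast? : ∀ (k a : ℕ), (fullPath a k).getLast? = some (a + k) := by
  intro k
  induction k with
  | zero => intro a; rfl
  | succ m ih =>
    intro a
    show (a :: fullPath (a + 1) m).getLast? = some (a + (m + 1))
    have h := ih (a + 1)
    cases hm : fullPath (a + 1) m with
    | nil => rw [hm] at h; simp [List.getLast?] at h
    | cons y s =>
      rw [List.getLast?_cons_cons, ← hm, h]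
      congr 1
      omega

lemma fullPath_weight : ∀ (k a : ℕ), pathWeightR X (fullPath a k) = nnSum X a (a + k) := by
  intro k
  induction k with
  | zero => intro a; simp [fullPath, pathWeightR, nnSum]
  | succ m ih =>
    intro a
    have hstep : pathWeightR X (fullPath a (m + 1)) =
        X a (a + 1) + pathWeightR X (fullPath (a + 1) m) := by
      cases m with
      | zero => simp [fullPath, pathWeightR]
      | succ m' => rfl
    rw [hstep, ih (a + 1)]
    have hnum : a + 1 + m = a + (m + 1) := by omega
    rw [hnum]
    unfold nnSum
    rw [Finset.sum_eq_sum_Ico_succ_bot (by omega : a < a + (m + 1))]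

lemma lppR_eq_nnSum (hb : ∀ i j, i < j → X i j = 1/2 ∨ X i j = 1) (n : ℕ) :
    lppR X 0 n = nnSum X 0 n := by
  have hmem : nnSum X 0 n ∈ {w | ∃ π : List ℕ, IsPathFromTo 0 n π ∧ w = pathWeightR X π} := by
    refine ⟨fullPath 0 n, ⟨fullPath_chain n 0, fullPath_head? 0 n, ?_⟩, ?_⟩
    · rw [fullPath_getLast?]; congr 1; omega
    · rw [fullPath_weight]; congr 1; omega
  have hub : ∀ w ∈ {w | ∃ π : List ℕ, IsPathFromTo 0 n π ∧ w = pathWeightR X π},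
      w ≤ nnSum X 0 n := by
    rintro w ⟨π, ⟨hc, hh, hl⟩, rfl⟩
    exact weight_le_nnSum hb π 0 n hc hh hl
  exact le_antisymm (csSup_le ⟨_, hmem⟩ hub) (le_csSup ⟨_, hub⟩ hmem)

end Aux

lemma integrable_dirac_real {f : ℝ → ℝ} (hf : Measurable f) (a : ℝ) :
    MeasureTheory.Integrable f (MeasureTheory.Measure.dirac a) := by
  refine ⟨hf.aestronglyMeasurable, ?_⟩
  simp only [HasFiniteIntegral, MeasureTheory.lintegral_dirac]
  exact ENNReal.coe_lt_top

/-- for `ν = (1-p)δ_{1/2} + p δ_1`, the time constant is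
`C(ν) = (1+p)/2`: almost surely `W_n / n → (1+p)/2`. -/
theorem timeConstant_two_atoms_half (p : ℝ) (hp0 : 0 ≤ p) (hp1 : p ≤ 1)
    {Ω : Type*} [MeasurableSpace Ω] (P : Measure Ω) [IsProbabilityMeasure P]
    (X : ℕ → ℕ → Ω → ℝ)
    (hiid : IIDEdgeWeightsR P X
      (ENNReal.ofReal (1 - p) • Measure.dirac (1 / 2 : ℝ) +
        ENNReal.ofReal p • Measure.dirac (1 : ℝ))) :
    ∀ᵐ ω ∂P, Filter.Tendsto (fun n : ℕ => lppR (fun i j => X i j ω) 0 n / (n : ℝ))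
      Filter.atTop (nhds ((1 + p) / 2)) := by
  obtain ⟨hmeas, hmap, hindep⟩ := hiid
  set ν : Measure ℝ := ENNReal.ofReal (1 - p) • Measure.dirac (1 / 2 : ℝ) +
      ENNReal.ofReal p • Measure.dirac (1 : ℝ) with hν
  -- the a.s. event that all weights lie in {1/2, 1}
  have hA : MeasurableSet ({1/2, 1} : Set ℝ) := (measurableSet_singleton (1 : ℝ)).insert (1/2)
  have hAc : ν ({1/2, 1} : Set ℝ)ᶜ = 0 := by
    rw [hν]
    simp only [Measure.add_apply, Measure.smul_apply, smul_eq_mul]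
    rw [Measure.dirac_apply' _ hA.compl, Measure.dirac_apply' _ hA.compl]
    simp [Set.indicator_apply]
  have hev : ∀ᵐ ω ∂P, ∀ i j, i < j → X i j ω = 1/2 ∨ X i j ω = 1 := by
    rw [ae_all_iff]
    intro i
    rw [ae_all_iff]
    intro j
    by_cases hij : i < j
    · have : P ((X i j) ⁻¹' ({1/2, 1} : Set ℝ)ᶜ) = 0 := by
        have := hmap i j hij
        rw [← this, Measure.map_apply (hmeas i j) hA.compl] at hAc
        exact hAc
      filter_upwards [measure_eq_zero_iff_ae_notMem.mp this] with ω hω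
      intro _
      have hmem : X i j ω ∈ ({1/2, 1} : Set ℝ) := by
        by_contra hmem
        exact hω hmem
      simpa using hmem
    · filter_upwards with ω h; exact absurd h hij
  -- the nearest-neighbor i.i.d. sequence
  set Y : ℕ → Ω → ℝ := fun i ω => X i (i + 1) ω with hY
  have hYmeas : ∀ i, Measurable (Y i) := fun i => hmeas i (i + 1)
  have hYmap : ∀ i, Measure.map (Y i) P = ν := fun i => hmap i (i + 1) (by omega)
  have hint : Integrable (Y 0) P := by
    have hid : Integrable (id : ℝ → ℝ) ν := by
      rw [hν]
      exact ((integrable_dirac_real measurable_id _).smul_measure ENNReal.ofReal_ne_top).add_measure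
        ((integrable_dirac_real measurable_id _).smul_measure ENNReal.ofReal_ne_top)
    have := (integrable_map_measure (by rw [hYmap 0]; exact measurable_id.aestronglyMeasurable)
      (hYmeas 0).aemeasurable).mp (by rw [hYmap 0]; exact hid)
    simpa using this
  have hpind : Pairwise (Function.onFun (IndepFun · · P) Y) := by
    intro i j hij
    have hne : (⟨(i, i + 1), by simp⟩ : {q : ℕ × ℕ // q.1 < q.2}) ≠ ⟨(j, j + 1), by simp⟩ := by
      intro h
      apply hij
      have := congrArg (fun q => q.1.1) h
      simpa using this
    exact hindep.indepFun hne
  have hident : ∀ i, IdentDistrib (Y i) (Y 0) P P := fun i =>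
    ⟨(hYmeas i).aemeasurable, (hYmeas 0).aemeasurable, by rw [hYmap i, hYmap 0]⟩
  have hslln := strong_law_ae_real Y hint hpind hident
  -- compute the expectation
  have hexp : P[Y 0] = (1 + p) / 2 := by
    have h1 : P[Y 0] = ∫ x, id x ∂ν := by
      rw [← hYmap 0, integral_map (hYmeas 0).aemeasurable aestronglyMeasurable_id]
      rfl
    rw [h1, hν, integral_add_measure
      ((integrable_dirac_real measurable_id _).smul_measure ENNReal.ofReal_ne_top)
      ((integrable_dirac_real measurable_id _).smul_measure ENNReal.ofReal_ne_top),
      integral_smul_measure, integral_smul_measure, integral_dirac, integral_dirac,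
      ENNReal.toReal_ofReal (by linarith), ENNReal.toReal_ofReal hp0]
    simp only [smul_eq_mul, id]
    ring
  rw [hexp] at hslln
  filter_upwards [hev, hslln] with ω hω hT
  apply hT.congr
  intro n
  congr 1
  rw [lppR_eq_nnSum hω n]
  unfold nnSum
  rw [← Finset.range_eq_Ico]
end

section
/- The Markov chain (Y_n) on ℕ with transition probabilities p_{i,i+1} = (1−p)^i and p_{i,1} = 1 − (1−p)^i (all other transitions zero), for p ∈ (0,1), is irreducible and has a unique stationary probability distribution π given by π_j = (1−p)^{j(j−1)/2} / Σ_{n=1}^∞ (1−p)^{n(n−1)/2} for all j ∈ ℕ. -/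
noncomputable section

/-- Transition kernel of the chain on states `{1, 2, 3, …}` (state `0` is unused):
`p_{i,i+1} = (1-p)^i`, `p_{i,1} = 1 - (1-p)^i`, all other transitions zero. -/
def K (p : ℝ) (i j : ℕ) : ℝ :=
  if 1 ≤ i then (if j = i + 1 then (1 - p) ^ i else if j = 1 then 1 - (1 - p) ^ i else 0)
  else 0

/-- `n`-step transition probabilities. -/
def Kpow (p : ℝ) : ℕ → ℕ → ℕ → ℝ
  | 0, i, j => if i = j then 1 else 0
  | n + 1, i, j => ∑' k : ℕ, Kpow p n i k * K p k j

/-- `π` is a stationary probability distribution for the chain (supported on states ≥ 1). -/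
def IsStationaryDist (p : ℝ) (π : ℕ → ℝ) : Prop :=
  π 0 = 0 ∧ (∀ j, 0 ≤ π j) ∧ Summable π ∧ (∑' j : ℕ, π j) = 1 ∧
  ∀ j : ℕ, 1 ≤ j → π j = ∑' i : ℕ, π i * K p i j

/-- The claimed stationary distribution `π_j = (1-p)^{j(j-1)/2} / Σ_{n≥1} (1-p)^{n(n-1)/2}`. -/
def piStat (p : ℝ) (j : ℕ) : ℝ :=
  if j = 0 then 0 else (1 - p) ^ (j * (j - 1) / 2) / ∑' n : ℕ, (1 - p) ^ ((n + 1) * n / 2)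

end


section test
variable {p : ℝ} (hp0 : 0 < p) (hp1 : p < 1)

example (i : ℕ) : K p (i+1) (i+2) = (1-p)^(i+1) := by simp [K]
example (i : ℕ) : K p (i+1) 1 = 1 - (1-p)^(i+1) := by simp [K]
example (i j : ℕ) : Kpow p 0 i j = if i = j then 1 else 0 := rfl
example (n i j : ℕ) : Kpow p (n+1) i j = ∑' k : ℕ, Kpow p n i k * K p k j := rfl

include hp0 hp1 in
lemma K_nonneg (i j : ℕ) : 0 ≤ K p i j := by
  have h1 : (0:ℝ) ≤ (1-p)^i := pow_nonneg (by linarith) i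
  have h2 : (1-p)^i ≤ 1 := pow_le_one₀ (by linarith) (by linarith)
  unfold K; split_ifs <;> linarith

include hp0 hp1 in
lemma K_le_one (i j : ℕ) : K p i j ≤ 1 := by
  have h1 : (0:ℝ) ≤ (1-p)^i := pow_nonneg (by linarith) i
  have h2 : (1-p)^i ≤ 1 := pow_le_one₀ (by linarith) (by linarith)
  unfold K; split_ifs <;> linarith

lemma K_ne_zero {i j : ℕ} (h : K p i j ≠ 0) : 1 ≤ i ∧ (j = i + 1 ∨ j = 1) := by
  unfold K at h
  split_ifs at h with h1 h2 h3
  · exact ⟨h1, Or.inl h2⟩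
  · exact ⟨h1, Or.inr h3⟩
  · exact absurd rfl h
  · exact absurd rfl h

lemma Kpow_eq_zero (p : ℝ) : ∀ n i j, i + n < j → Kpow p n i j = 0
  | 0, i, j, h => by
    show (if i = j then (1:ℝ) else 0) = 0
    rw [if_neg (by omega)]
  | n+1, i, j, h => by
    show (∑' k : ℕ, Kpow p n i k * K p k j) = 0
    have : ∀ k : ℕ, Kpow p n i k * K p k j = 0 := by
      intro k
      by_cases hk : K p k j = 0
      · rw [hk, mul_zero]
      · obtain ⟨hk1, hk2 | hk2⟩ := K_ne_zero hk
        · rw [Kpow_eq_zero p n i k (by omega), zero_mul]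
        · omega
    simp [this]

lemma Kpow_summable (p : ℝ) (n i j : ℕ) : Summable (fun k => Kpow p n i k * K p k j) := by
  apply summable_of_ne_finset_zero (s := Finset.range (i + n + 1))
  intro k hk
  rw [Finset.mem_range, not_lt] at hk
  rw [Kpow_eq_zero p n i k (by omega), zero_mul]

include hp0 hp1 in
lemma Kpow_nonneg : ∀ n i j, 0 ≤ Kpow p n i j
  | 0, i, j => by
    show (0:ℝ) ≤ if i = j then 1 else 0
    split_ifs <;> norm_num
  | n+1, i, j => by
    show (0:ℝ) ≤ ∑' k : ℕ, Kpow p n i k * K p k j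
    exact tsum_nonneg fun k => mul_nonneg (Kpow_nonneg n i k) (K_nonneg hp0 hp1 k j)

include hp0 hp1 in
lemma le_Kpow_succ (n i k j : ℕ) : Kpow p n i k * K p k j ≤ Kpow p (n+1) i j :=
  Summable.le_tsum (Kpow_summable p n i j) k
    (fun b _ => mul_nonneg (Kpow_nonneg hp0 hp1 n i b) (K_nonneg hp0 hp1 b j))

-- continuation test
include hp0 hp1 in
lemma Kpow_pos_trans : ∀ n m i k j, 0 < Kpow p m i k → 0 < Kpow p n k j →
    0 < Kpow p (m + n) i j
  | 0, m, i, k, j, h1, h2 => by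
    have hkj : k = j := by
      by_contra hne
      have : Kpow p 0 k j = 0 := by
        show (if k = j then (1:ℝ) else 0) = 0
        rw [if_neg hne]
      rw [this] at h2; exact lt_irrefl 0 h2
    subst hkj; simpa using h1
  | n+1, m, i, k, j, h1, h2 => by
    have h2' : (0:ℝ) < ∑' l : ℕ, Kpow p n k l * K p l j := h2
    have hex : ∃ l, Kpow p n k l * K p l j ≠ 0 := by
      by_contra hall
      push_neg at hall
      simp [hall] at h2'
    obtain ⟨l, hl⟩ := hex
    have hK1 : 0 < Kpow p n k l :=
      lt_of_le_of_ne (Kpow_nonneg hp0 hp1 n k l) (Ne.symm (left_ne_zero_of_mul hl))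
    have hK2 : 0 < K p l j :=
      lt_of_le_of_ne (K_nonneg hp0 hp1 l j) (Ne.symm (right_ne_zero_of_mul hl))
    have hIH : 0 < Kpow p (m + n) i l := Kpow_pos_trans n m i k l h1 hK1
    have : 0 < Kpow p (m + n) i l * K p l j := mul_pos hIH hK2
    calc (0:ℝ) < Kpow p (m + n) i l * K p l j := this
      _ ≤ Kpow p (m + n + 1) i j := le_Kpow_succ hp0 hp1 (m+n) i l j

lemma Kpow_one (i j : ℕ) : Kpow p 1 i j = K p i j := by
  show (∑' k : ℕ, Kpow p 0 i k * K p k j) = K p i j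
  rw [tsum_eq_single i ?_]
  · show (if i = i then (1:ℝ) else 0) * K p i j = K p i j
    rw [if_pos rfl, one_mul]
  · intro b hb
    show (if i = b then (1:ℝ) else 0) * K p b j = 0
    rw [if_neg (Ne.symm hb), zero_mul]

include hp0 hp1 in
lemma climb : ∀ m, 0 < Kpow p m 1 (m+1)
  | 0 => by norm_num [Kpow]
  | m+1 => by
    have h1 : 0 < Kpow p m 1 (m+1) := climb m
    have h2 : 0 < K p (m+1) (m+2) := by
      simp only [show K p (m+1) (m+2) = (1-p)^(m+1) by simp [K]]
      exact pow_pos (by linarith) _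
    calc (0:ℝ) < Kpow p m 1 (m+1) * K p (m+1) (m+2) := mul_pos h1 h2
      _ ≤ Kpow p (m+1) 1 (m+2) := le_Kpow_succ hp0 hp1 m 1 (m+1) (m+2)

include hp0 hp1 in
lemma irred (i j : ℕ) (hi : 1 ≤ i) (hj : 1 ≤ j) : ∃ n, 0 < Kpow p n i j := by
  refine ⟨1 + (j - 1), Kpow_pos_trans hp0 hp1 (j-1) 1 i 1 j ?_ ?_⟩
  · rw [Kpow_one]
    have : K p i 1 = 1 - (1-p)^i := by
      unfold K
      rw [if_pos hi, if_neg (by omega), if_pos rfl]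
    rw [this]
    have : (1-p)^i < 1 := pow_lt_one₀ (by linarith) (by linarith) (by omega)
    linarith
  · have := climb hp0 hp1 (j-1)
    rwa [show j - 1 + 1 = j by omega] at this

end test

section stat
variable {p : ℝ} (hp0 : 0 < p) (hp1 : p < 1)

lemma exp_ident (j : ℕ) : (j+1)*j/2 + (j+1) = (j+2)*(j+1)/2 := by
  have h : (j+2)*(j+1) = (j+1)*j + (j+1)*2 := by ring
  rw [h, Nat.add_mul_div_right _ _ (by norm_num : (0:ℕ) < 2)]

include hp0 hp1 in
lemma summable_S : Summable (fun n : ℕ => (1-p)^((n+1)*n/2)) := by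
  have hq0 : (0:ℝ) ≤ 1 - p := by linarith
  have hq1 : (1:ℝ) - p < 1 := by linarith
  refine Summable.of_nonneg_of_le (fun n => pow_nonneg hq0 _) (fun n => ?_)
    (summable_geometric_of_lt_one hq0 hq1)
  refine pow_le_pow_of_le_one hq0 (le_of_lt hq1) ?_
  rw [Nat.le_div_iff_mul_le (by norm_num : (0:ℕ) < 2)]
  nlinarith [Nat.le_mul_self n]

include hp0 hp1 in
lemma S_pos : 0 < ∑' n : ℕ, (1-p)^((n+1)*n/2) := by
  have h := Summable.le_tsum (summable_S hp0 hp1) 0 (fun n _ => pow_nonneg (by linarith) _)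
  simpa using lt_of_lt_of_le one_pos h

lemma piStat_zero : piStat p 0 = 0 := if_pos rfl

lemma piStat_succ (j : ℕ) :
    piStat p (j+1) = (1-p)^((j+1)*j/2) / ∑' n : ℕ, (1-p)^((n+1)*n/2) := by
  unfold piStat
  rw [if_neg (Nat.succ_ne_zero j)]
  norm_num

lemma piStat_mul (j : ℕ) : piStat p (j+1) * (1-p)^(j+1) = piStat p (j+2) := by
  rw [piStat_succ, piStat_succ, div_mul_eq_mul_div, ← pow_add, exp_ident]

include hp0 hp1 in
lemma piStat_nonneg (j : ℕ) : 0 ≤ piStat p j := by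
  cases j with
  | zero => rw [piStat_zero]
  | succ m =>
    rw [piStat_succ]
    exact div_nonneg (pow_nonneg (by linarith) _) (le_of_lt (S_pos hp0 hp1))

include hp0 hp1 in
lemma piStat_summable : Summable (piStat p) := by
  rw [← summable_nat_add_iff 1]
  have : (fun n => piStat p (n+1)) =
      fun n => (1-p)^((n+1)*n/2) / ∑' n : ℕ, (1-p)^((n+1)*n/2) := by
    funext n; exact piStat_succ n
  rw [this]
  exact (summable_S hp0 hp1).div_const _

include hp0 hp1 in
lemma piStat_tsum : (∑' j : ℕ, piStat p j) = 1 := by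
  rw [Summable.tsum_eq_zero_add (piStat_summable hp0 hp1), piStat_zero, zero_add]
  have : (fun n => piStat p (n+1)) =
      fun n => (1-p)^((n+1)*n/2) / ∑' n : ℕ, (1-p)^((n+1)*n/2) := by
    funext n; exact piStat_succ n
  rw [this, tsum_div_const]
  exact div_self (ne_of_gt (S_pos hp0 hp1))

/-- The stationary equation for `j ≥ 2`, for any `π` vanishing at 0. -/
lemma tsum_K_succ_succ (π : ℕ → ℝ) (h0 : π 0 = 0) (m : ℕ) :
    (∑' i : ℕ, π i * K p i (m+2)) = π (m+1) * (1-p)^(m+1) := by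
  rw [tsum_eq_single (m+1) ?_]
  · congr 1
    simp [K]
  · intro i hi
    rcases Nat.eq_zero_or_pos i with h | h
    · rw [h, h0, zero_mul]
    · have : K p i (m+2) = 0 := by
        unfold K
        rw [if_pos (show 1 ≤ i by omega), if_neg (by omega), if_neg (by omega)]
      rw [this, mul_zero]

include hp0 hp1 in
lemma summable_mul_K (π : ℕ → ℝ) (hnn : ∀ j, 0 ≤ π j) (hsum : Summable π) (j : ℕ) :
    Summable (fun i => π i * K p i j) := by
  refine Summable.of_nonneg_of_le
    (fun i => mul_nonneg (hnn i) (K_nonneg hp0 hp1 i j))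
    (fun i => mul_le_of_le_one_right (hnn i) (K_le_one hp0 hp1 i j)) hsum

include hp0 hp1 in
lemma piStat_stat_one : piStat p 1 = ∑' i : ℕ, piStat p i * K p i 1 := by
  have hsum := summable_mul_K hp0 hp1 (piStat p) (piStat_nonneg hp0 hp1)
    (piStat_summable hp0 hp1) 1
  rw [Summable.tsum_eq_zero_add hsum, piStat_zero, zero_mul, zero_add]
  have hK : ∀ i : ℕ, K p (i+1) 1 = 1 - (1-p)^(i+1) := by
    intro i
    unfold K
    rw [if_pos (by omega), if_neg (by omega), if_pos rfl]
  have hterm : ∀ i : ℕ, piStat p (i+1) * K p (i+1) 1 = piStat p (i+1) - piStat p (i+2) := by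
    intro i
    rw [hK, mul_sub, mul_one, piStat_mul]
  rw [tsum_congr hterm]
  have hs1 : Summable (fun i => piStat p (i+1)) :=
    (summable_nat_add_iff 1).mpr (piStat_summable hp0 hp1)
  have hs2 : Summable (fun i => piStat p (i+2)) :=
    (summable_nat_add_iff 2).mpr (piStat_summable hp0 hp1)
  rw [Summable.tsum_sub hs1 hs2]
  have ht1 : (∑' i : ℕ, piStat p (i+1)) = 1 := by
    have := Summable.tsum_eq_zero_add (piStat_summable hp0 hp1)
    rw [piStat_tsum hp0 hp1, piStat_zero, zero_add] at this
    exact this.symm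
  have ht2 : (∑' i : ℕ, piStat p (i+2)) = 1 - piStat p 1 := by
    have := Summable.tsum_eq_zero_add hs1
    rw [ht1] at this
    have : (∑' i : ℕ, piStat p (i+1+1)) = 1 - piStat p (0+1) := by linarith
    simpa using this
  rw [ht1, ht2]
  ring

include hp0 hp1 in
lemma piStat_isStationary : IsStationaryDist p (piStat p) := by
  refine ⟨piStat_zero, piStat_nonneg hp0 hp1, piStat_summable hp0 hp1,
    piStat_tsum hp0 hp1, ?_⟩
  intro j hj
  match j, hj with
  | 1, _ => exact piStat_stat_one hp0 hp1
  | (m+2), _ =>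
    rw [tsum_K_succ_succ (piStat p) piStat_zero m, piStat_mul]

include hp0 hp1 in
lemma unique_stat (π : ℕ → ℝ) (h : IsStationaryDist p π) : π = piStat p := by
  obtain ⟨h0, hnn, hsum, htot, hstat⟩ := h
  have hstep : ∀ m : ℕ, π (m+2) = π (m+1) * (1-p)^(m+1) := by
    intro m
    rw [hstat (m+2) (by omega), tsum_K_succ_succ π h0 m]
  have hform : ∀ j : ℕ, π (j+1) = π 1 * (1-p)^((j+1)*j/2) := by
    intro j
    induction j with
    | zero => simp
    | succ m ih =>
      rw [hstep m, ih, mul_assoc, ← pow_add, exp_ident]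
  have hS := S_pos hp0 hp1
  have hone : π 1 * (∑' n : ℕ, (1-p)^((n+1)*n/2)) = 1 := by
    have h1 : (∑' j : ℕ, π j) = π 0 + ∑' j : ℕ, π (j+1) := Summable.tsum_eq_zero_add hsum
    rw [htot, h0, zero_add, tsum_congr hform, tsum_mul_left] at h1
    exact h1.symm
  have hpi1 : π 1 = 1 / ∑' n : ℕ, (1-p)^((n+1)*n/2) :=
    (eq_div_iff hS.ne').mpr hone
  funext j
  cases j with
  | zero => rw [h0, piStat_zero]
  | succ m =>
    rw [hform m, piStat_succ, hpi1]
    ring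

end stat

/-- for `p ∈ (0,1)`, the chain with transitions `p_{i,i+1} = (1-p)^i`,
`p_{i,1} = 1 - (1-p)^i` is irreducible, and `piStat p` is its unique stationary
probability distribution. -/
theorem markov_chain_irreducible_unique_stationary (p : ℝ) (hp0 : 0 < p) (hp1 : p < 1) :
    (∀ i j : ℕ, 1 ≤ i → 1 ≤ j → ∃ n : ℕ, 0 < Kpow p n i j) ∧
    IsStationaryDist p (piStat p) ∧
    (∀ π : ℕ → ℝ, IsStationaryDist p π → π = piStat p) :=
  ⟨fun i j hi hj => irred hp0 hp1 i j hi hj, piStat_isStationary hp0 hp1,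
   fun π h => unique_stat hp0 hp1 π h⟩
end
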